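/- arXiv:2101.03559 — 4 statements merged into one kernel-verified Lean document; each statement's English description precedes it below -/
import Mathlib

section
/- For f holomorphic from 𝔻 to 𝔻 and d ≥ 1, f is a Blaschke product of degree d if and only if for every w ∈ 𝔻 the hyperbolic difference quotient f*(·,w) is a Blaschke product of degree d−1, if and only if f*(·,w₀) is a Blaschke product of degree d−1 for some w₀ ∈ 𝔻. -/
open Complex Filter Set Metric Finset

noncomputable section

/-- `f` is a holomorphic self-map of the open unit disk. -/
def HolSelfDisk (f : ℂ → ℂ) : Prop :=
  DifferentiableOn ℂ f (Metric.ball (0:ℂ) 1) ∧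
    Set.MapsTo f (Metric.ball (0:ℂ) 1) (Metric.ball (0:ℂ) 1)

/-- `B` is a finite Blaschke product of degree `d` (as a function on the unit disk). -/
def IsBlaschke (d : ℕ) (B : ℂ → ℂ) : Prop :=
  ∃ (θ : ℝ) (a : Fin d → ℂ), (∀ j, ‖a j‖ < 1) ∧
    ∀ z ∈ Metric.ball (0:ℂ) 1,
      B z = Complex.exp (θ * Complex.I) *
        ∏ j, (z - a j) / (1 - (starRingEnd ℂ) (a j) * z)

/-- The hyperbolic difference quotient `f*(z,w)`. -/
def hdq (f : ℂ → ℂ) (w : ℂ) (z : ℂ) : ℂ :=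
  if z = w then
    deriv f z * ((1 - ‖z‖ ^ 2 : ℝ) : ℂ) / ((1 - ‖f z‖ ^ 2 : ℝ) : ℂ)
  else
    ((f z - f w) / (1 - (starRingEnd ℂ) (f w) * f z)) /
      ((z - w) / (1 - (starRingEnd ℂ) w * z))

/-- Iterated hyperbolic difference quotient: `iterHdq f w h = Δ_{w (h-1), …, w 0} f`. -/
def iterHdq (f : ℂ → ℂ) (w : ℕ → ℂ) : ℕ → ℂ → ℂ
  | 0 => f
  | h + 1 => hdq (iterHdq f w h) (w h)

/-- The Stolz region of vertex `σ` and amplitude `M`. -/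
def Stolz (σ : ℂ) (M : ℝ) : Set ℂ :=
  {z : ℂ | ‖z‖ < 1 ∧ ‖σ - z‖ / (1 - ‖z‖) < M}

/-- `f` has non-tangential limit `c` at `σ`. -/
def NTLim (f : ℂ → ℂ) (σ c : ℂ) : Prop :=
  ∀ M : ℝ, 1 < M → Filter.Tendsto f (nhdsWithin σ (Stolz σ M)) (nhds c)

/-- The boundary dilation coefficient, as an extended real number. -/
def betaE (f : ℂ → ℂ) (σ : ℂ) : EReal :=
  Filter.liminf
    (fun z => (((1 - ‖f z‖) / (1 - ‖z‖) : ℝ) : EReal))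
    (nhdsWithin σ (Metric.ball (0:ℂ) 1))


-- ### Auxiliary lemmas ###
open Polynomial Topology in
private lemma _auxopen : True := trivial
open Polynomial Topology

/-- Basic Blaschke product as a function. -/
def blp {d : ℕ} (e : Fin d → ℂ) (z : ℂ) : ℂ :=
  ∏ j, (z - e j) / (1 - (starRingEnd ℂ) (e j) * z)

lemma normSq_key (a z : ℂ) :
    Complex.normSq (1 - (starRingEnd ℂ) a * z) - Complex.normSq (z - a)
      = (1 - Complex.normSq a) * (1 - Complex.normSq z) := by
  simp only [Complex.normSq_apply, Complex.sub_re, Complex.sub_im, Complex.mul_re,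
    Complex.mul_im, Complex.one_re, Complex.one_im, Complex.conj_re, Complex.conj_im]
  ring

lemma denom_ne {a z : ℂ} (ha : ‖a‖ < 1) (hz : ‖z‖ ≤ 1) :
    1 - (starRingEnd ℂ) a * z ≠ 0 := by
  intro h
  have h1 : (starRingEnd ℂ) a * z = 1 := by
    have := sub_eq_zero.mp h; exact this.symm
  have := congrArg norm h1
  rw [norm_mul, Complex.norm_conj, norm_one] at this
  nlinarith [norm_nonneg a, norm_nonneg z]

lemma factor_abs_lt {a z : ℂ} (ha : ‖a‖ < 1) (hz : ‖z‖ < 1) :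
    ‖(z - a) / (1 - (starRingEnd ℂ) a * z)‖ < 1 := by
  rw [norm_div, div_lt_one (by
    have := denom_ne ha hz.le
    exact norm_pos_iff.2 this)]
  have h := normSq_key a z
  have h1 : Complex.normSq (z - a) < Complex.normSq (1 - (starRingEnd ℂ) a * z) := by
    have ha2 : Complex.normSq a < 1 := by
      rw [Complex.normSq_eq_norm_sq]; nlinarith [norm_nonneg a]
    have hz2 : Complex.normSq z < 1 := by
      rw [Complex.normSq_eq_norm_sq]; nlinarith [norm_nonneg z]
    nlinarith
  rw [← Complex.sq_norm, ← Complex.sq_norm] at h1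
  have := norm_nonneg (z - a)
  have := norm_nonneg (1 - (starRingEnd ℂ) a * z)
  nlinarith

lemma factor_abs_ge {a z : ℂ} (ha : ‖a‖ < 1) (hz : 1 ≤ ‖z‖) :
    ‖1 - (starRingEnd ℂ) a * z‖ ≤ ‖z - a‖ := by
  have h := normSq_key a z
  have ha2 : Complex.normSq a ≤ 1 := by
    rw [Complex.normSq_eq_norm_sq]; nlinarith [norm_nonneg a]
  have hz2 : 1 ≤ Complex.normSq z := by
    rw [Complex.normSq_eq_norm_sq]; nlinarith [norm_nonneg z]
  have h1 : Complex.normSq (1 - (starRingEnd ℂ) a * z) ≤ Complex.normSq (z - a) := by nlinarith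
  rw [← Complex.sq_norm, ← Complex.sq_norm] at h1
  have := norm_nonneg (z - a)
  have := norm_nonneg (1 - (starRingEnd ℂ) a * z)
  nlinarith

lemma blp_abs_le {d : ℕ} {e : Fin d → ℂ} (he : ∀ j, ‖e j‖ < 1)
    {z : ℂ} (hz : ‖z‖ < 1) : ‖blp e z‖ ≤ 1 := by
  rw [blp, norm_prod]
  exact Finset.prod_le_one (fun j _ => norm_nonneg _)
    (fun j _ => (factor_abs_lt (he j) hz).le)


lemma natDeg_prod_one_sub {ι : Type*} (s : Finset ι) (w : ι → ℂ) :
    (∏ i ∈ s, (1 - C (w i) * X)).natDegree ≤ s.card := by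
  refine le_trans (Polynomial.natDegree_prod_le s _) ?_
  rw [Finset.card_eq_sum_ones]
  refine Finset.sum_le_sum fun i _ => le_trans (natDegree_sub_le _ _) ?_
  simp only [natDegree_one, max_le_iff]
  exact ⟨Nat.zero_le _, le_trans (natDegree_C_mul_le _ _) (by simp)⟩

lemma coeff_prod_one_sub {ι : Type*} [DecidableEq ι] (s : Finset ι) (w : ι → ℂ) :
    (∏ i ∈ s, (1 - C (w i) * X)).coeff s.card = ∏ i ∈ s, (-(w i)) := by
  induction s using Finset.induction with
  | empty => simp
  | @insert a s ha ih =>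
    rw [Finset.prod_insert ha, Finset.prod_insert ha, Finset.card_insert_of_notMem ha]
    have hdeg := natDeg_prod_one_sub s w
    have hzero : (∏ i ∈ s, (1 - C (w i) * X)).coeff (s.card + 1) = 0 :=
      coeff_eq_zero_of_natDegree_lt (by omega)
    rw [sub_mul, one_mul, coeff_sub, hzero, zero_sub, mul_assoc, coeff_C_mul,
      coeff_X_mul, ih, neg_mul]

lemma unimod_mul_conj {c : ℂ} (hc : ‖c‖ = 1) : c * (starRingEnd ℂ) c = 1 := by
  rw [Complex.mul_conj]; norm_cast; rw [Complex.normSq_eq_norm_sq, hc]; norm_num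

lemma mobius_blp {d : ℕ} {c a : ℂ} (hc : ‖c‖ = 1) (ha : ‖a‖ < 1)
    {b : Fin d → ℂ} (hb : ∀ j, ‖b j‖ < 1) :
    ∃ c' : ℂ, ‖c'‖ = 1 ∧ ∃ e : Fin d → ℂ, (∀ j, ‖e j‖ < 1) ∧
      ∀ z, ‖z‖ < 1 →
        (c * blp b z - a) / (1 - (starRingEnd ℂ) a * (c * blp b z)) = c' * blp e z := by
  have hcne : c ≠ 0 := fun h => by simp [h] at hc
  set P : ℂ[X] := ∏ j, (X - C (b j)) with hP
  set Q : ℂ[X] := ∏ j : Fin d, (1 - C ((starRingEnd ℂ) (b j)) * X) with hQ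
  set R : ℂ[X] := C c * P - C a * Q with hR
  have evalP : ∀ z : ℂ, P.eval z = ∏ j, (z - b j) := fun z => by simp [hP, eval_prod]
  have evalQ : ∀ z : ℂ, Q.eval z = ∏ j, (1 - (starRingEnd ℂ) (b j) * z) := fun z => by
    simp [hQ, eval_prod]
  have evalR : ∀ z : ℂ, R.eval z
      = c * ∏ j, (z - b j) - a * ∏ j, (1 - (starRingEnd ℂ) (b j) * z) := fun z => by
    simp [hR, evalP, evalQ]
  have hPmonic : P.Monic := monic_prod_of_monic _ _ fun j _ => monic_X_sub_C _
  have hPdeg : P.natDegree = d := by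
    rw [hP, natDegree_prod_of_monic _ _ fun j _ => monic_X_sub_C _]
    simp
  have hPcoeff : P.coeff d = 1 := by
    rw [← hPdeg]; exact hPmonic.coeff_natDegree
  have hQdeg : Q.natDegree ≤ d := by
    simpa using natDeg_prod_one_sub (Finset.univ : Finset (Fin d))
      (fun j => (starRingEnd ℂ) (b j))
  have hQcoeff : Q.coeff d = ∏ j, (-((starRingEnd ℂ) (b j))) := by
    simpa using coeff_prod_one_sub (Finset.univ : Finset (Fin d))
      (fun j => (starRingEnd ℂ) (b j))
  have hRcoeff : R.coeff d = c - a * ∏ j, (-((starRingEnd ℂ) (b j))) := by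
    rw [hR, coeff_sub, coeff_C_mul, coeff_C_mul, hPcoeff, hQcoeff, mul_one]
  have habs : ‖a * ∏ j, (-((starRingEnd ℂ) (b j)))‖ < 1 := by
    rw [norm_mul, norm_prod]
    have h1 : ∏ j, ‖-((starRingEnd ℂ) (b j))‖ ≤ 1 :=
      Finset.prod_le_one (fun j _ => norm_nonneg _)
        (fun j _ => by simpa [Complex.norm_conj] using (hb j).le)
    have h2 : 0 ≤ ∏ j, ‖-((starRingEnd ℂ) (b j))‖ :=
      Finset.prod_nonneg fun j _ => norm_nonneg _
    nlinarith [norm_nonneg a]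
  have hRcoeff_ne : R.coeff d ≠ 0 := by
    rw [hRcoeff]
    intro h
    have : c = a * ∏ j, (-((starRingEnd ℂ) (b j))) := sub_eq_zero.mp h
    rw [← this] at habs; exact absurd hc (by linarith)
  have hRne : R ≠ 0 := fun h => hRcoeff_ne (by simp [h])
  have hRdeg : R.natDegree = d := by
    have h1 : R.natDegree ≤ d :=
      le_trans (natDegree_sub_le _ _) (max_le
        (le_trans (natDegree_C_mul_le _ _) (le_of_eq hPdeg))
        (le_trans (natDegree_C_mul_le _ _) hQdeg))
    have h2 : d ≤ R.natDegree := le_natDegree_of_ne_zero hRcoeff_ne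
    omega
  set L : ℂ := R.coeff d with hLdef
  have hL : R.leadingCoeff = L := by rw [Polynomial.leadingCoeff, hRdeg]
  have hLne : L ≠ 0 := hRcoeff_ne
  have hsp : R.Splits := IsAlgClosed.splits R
  have hcard : Multiset.card R.roots = d := by
    have := hsp.natDegree_eq_card_roots
    rw [hRdeg] at this
    exact this.symm
  set l : List ℂ := R.roots.toList with hldef
  have hl : l.length = d := by rw [hldef, Multiset.length_toList, hcard]
  set e : Fin d → ℂ := fun j => l.get (Fin.cast hl.symm j) with hedef
  have hfact : ∀ z : ℂ, R.eval z = L * ∏ j, (z - e j) := by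
    intro z
    conv_lhs => rw [hsp.eq_prod_roots]
    rw [eval_mul, eval_C, hL]
    congr 1
    rw [eval_multiset_prod, Multiset.map_map, ← Multiset.coe_toList R.roots, ← hldef,
      Multiset.map_coe, Multiset.prod_coe]
    have : l = List.ofFn l.get := (List.ofFn_get l).symm
    rw [this, List.map_ofFn, List.prod_ofFn]
    exact Fintype.prod_equiv (finCongr hl) _ _ (fun i => by
      simp [hedef, Function.comp, finCongr, eval_sub, eval_X, eval_C])
  have hroot0 : ∀ j, R.eval (e j) = 0 := by
    intro j
    have hmem : e j ∈ R.roots := by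
      rw [← Multiset.coe_toList R.roots, ← hldef, Multiset.mem_coe]
      apply List.get_mem
    exact ((Polynomial.mem_roots'.mp hmem).2 : R.IsRoot (e j))
  have hno : ∀ z : ℂ, 1 ≤ ‖z‖ → R.eval z ≠ 0 := by
    intro z hz h0
    rw [evalR] at h0
    have heq : c * ∏ j, (z - b j) = a * ∏ j, (1 - (starRingEnd ℂ) (b j) * z) :=
      sub_eq_zero.mp h0
    by_cases hQ0 : ∏ j, (1 - (starRingEnd ℂ) (b j) * z) = 0
    · rw [hQ0, mul_zero, mul_eq_zero] at heq
      rcases heq with h | h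
      · exact hcne h
      · rcases Finset.prod_eq_zero_iff.mp h with ⟨j, _, hj⟩
        have : z = b j := sub_eq_zero.mp hj
        rw [this] at hz; linarith [hb j]
    · have habseq := congrArg norm heq
      rw [norm_mul, norm_mul, norm_prod, norm_prod, hc, one_mul] at habseq
      have hge : ∏ j, ‖1 - (starRingEnd ℂ) (b j) * z‖
          ≤ ∏ j, ‖z - b j‖ :=
        Finset.prod_le_prod (fun j _ => norm_nonneg _)
          (fun j _ => factor_abs_ge (hb j) hz)
      have hpos : 0 < ∏ j, ‖1 - (starRingEnd ℂ) (b j) * z‖ := by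
        apply Finset.prod_pos
        intro j _
        exact norm_pos_iff.mpr (fun h => hQ0 (Finset.prod_eq_zero (Finset.mem_univ j) h))
      nlinarith [norm_nonneg a]
  have helt : ∀ j, ‖e j‖ < 1 := by
    intro j
    by_contra h
    exact hno (e j) (not_lt.mp h) (hroot0 j)
  -- the "reversed" identity
  have hDE : ∀ z : ℂ, Q.eval z - (starRingEnd ℂ) a * c * P.eval z
      = c * (starRingEnd ℂ) L * ∏ j, (1 - (starRingEnd ℂ) (e j) * z) := by
    have hpoly : Q - C ((starRingEnd ℂ) a * c) * P
        = C (c * (starRingEnd ℂ) L) * ∏ j : Fin d, (1 - C ((starRingEnd ℂ) (e j)) * X) := by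
      apply Polynomial.eq_of_infinite_eval_eq
      apply Set.Infinite.mono (s := {z : ℂ | z ≠ 0})
      swap
      · exact Set.Finite.infinite_compl (Set.finite_singleton 0)
      intro z hz
      simp only [Set.mem_setOf_eq] at hz ⊢
      set y : ℂ := ((starRingEnd ℂ) z)⁻¹ with hy
      have hzc : (starRingEnd ℂ) z ≠ 0 := fun h => hz (by simpa using congrArg (starRingEnd ℂ) h)
      have hyc : (starRingEnd ℂ) y = z⁻¹ := by
        rw [hy, map_inv₀, Complex.conj_conj]
      have key := congrArg (fun t => c * z ^ d * (starRingEnd ℂ) t) (hfact y)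
      -- LHS of key
      have lhs_eq : c * z ^ d * (starRingEnd ℂ) (R.eval y)
          = Q.eval z - (starRingEnd ℂ) a * c * P.eval z := by
        rw [evalR y, map_sub, map_mul, map_mul, map_prod, map_prod]
        have e1 : ∀ j, (starRingEnd ℂ) (y - b j) = z⁻¹ - (starRingEnd ℂ) (b j) := by
          intro j; rw [map_sub, hyc]
        have e2 : ∀ j, (starRingEnd ℂ) (1 - (starRingEnd ℂ) (b j) * y)
            = 1 - b j * z⁻¹ := by
          intro j; rw [map_sub, map_one, map_mul, Complex.conj_conj, hyc]
        simp only [e1, e2]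
        have hzd : ∀ g : Fin d → ℂ, z ^ d * ∏ j, g j = ∏ j, (z * g j) := by
          intro g
          rw [Finset.prod_mul_distrib, Finset.prod_const, Finset.card_univ, Fintype.card_fin]
        have h1 : ∀ j : Fin d, z * (z⁻¹ - (starRingEnd ℂ) (b j))
            = 1 - (starRingEnd ℂ) (b j) * z := by
          intro j; field_simp
        have h2 : ∀ j : Fin d, z * (1 - b j * z⁻¹) = z - b j := by
          intro j; field_simp
        calc c * z ^ d * ((starRingEnd ℂ) c * ∏ j, (z⁻¹ - (starRingEnd ℂ) (b j))
              - (starRingEnd ℂ) a * ∏ j, (1 - b j * z⁻¹))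
            = (c * (starRingEnd ℂ) c) * (z ^ d * ∏ j, (z⁻¹ - (starRingEnd ℂ) (b j)))
              - ((starRingEnd ℂ) a * c) * (z ^ d * ∏ j, (1 - b j * z⁻¹)) := by ring
          _ = Q.eval z - (starRingEnd ℂ) a * c * P.eval z := by
              rw [unimod_mul_conj hc, one_mul, hzd, hzd, evalP, evalQ]
              congr 1
              · exact Finset.prod_congr rfl fun j _ => h1 j
              · congr 1
                exact Finset.prod_congr rfl fun j _ => h2 j
      -- RHS of key
      have rhs_eq : c * z ^ d * (starRingEnd ℂ) (L * ∏ j, (y - e j))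
          = c * (starRingEnd ℂ) L * ∏ j, (1 - (starRingEnd ℂ) (e j) * z) := by
        rw [map_mul, map_prod]
        have e1 : ∀ j, (starRingEnd ℂ) (y - e j) = z⁻¹ - (starRingEnd ℂ) (e j) := by
          intro j; rw [map_sub, hyc]
        simp only [e1]
        have hzd : z ^ d * ∏ j, (z⁻¹ - (starRingEnd ℂ) (e j))
            = ∏ j, (z * (z⁻¹ - (starRingEnd ℂ) (e j))) := by
          rw [Finset.prod_mul_distrib, Finset.prod_const, Finset.card_univ, Fintype.card_fin]
        have h1 : ∀ j : Fin d, z * (z⁻¹ - (starRingEnd ℂ) (e j))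
            = 1 - (starRingEnd ℂ) (e j) * z := by
          intro j; field_simp
        calc c * z ^ d * ((starRingEnd ℂ) L * ∏ j, (z⁻¹ - (starRingEnd ℂ) (e j)))
            = c * (starRingEnd ℂ) L * (z ^ d * ∏ j, (z⁻¹ - (starRingEnd ℂ) (e j))) := by ring
          _ = _ := by rw [hzd]; congr 1; exact Finset.prod_congr rfl fun j _ => h1 j
      have : Q.eval z - (starRingEnd ℂ) a * c * P.eval z
          = c * (starRingEnd ℂ) L * ∏ j, (1 - (starRingEnd ℂ) (e j) * z) :=
        lhs_eq.symm.trans (key.trans rhs_eq)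
      simpa [eval_prod] using this
    intro z
    have := congrArg (Polynomial.eval z) hpoly
    simpa [eval_prod] using this
  -- assemble
  refine ⟨L / (c * (starRingEnd ℂ) L), ?_, e, helt, ?_⟩
  · rw [norm_div, norm_mul, Complex.norm_conj, hc, one_mul, div_self]
    exact norm_ne_zero_iff.mpr hLne
  intro z hz
  have hQz : Q.eval z ≠ 0 := by
    rw [evalQ]
    exact Finset.prod_ne_zero_iff.mpr fun j _ => denom_ne (hb j) hz.le
  have hblp : blp b z = P.eval z / Q.eval z := by
    rw [blp, evalP, evalQ, Finset.prod_div_distrib]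
  have hDz : Q.eval z - (starRingEnd ℂ) a * c * P.eval z ≠ 0 := by
    rw [hDE z]
    refine mul_ne_zero (mul_ne_zero hcne ?_) ?_
    · simpa using hLne
    · exact Finset.prod_ne_zero_iff.mpr fun j _ => denom_ne (helt j) hz.le
  have hQz' : (∏ j, (1 - (starRingEnd ℂ) (b j) * z)) ≠ 0 := by
    rw [evalQ] at hQz; exact hQz
  have hnum : c * blp b z - a = R.eval z / Q.eval z := by
    rw [hblp, evalR, ← evalP, ← evalQ]
    field_simp
  have hden : 1 - (starRingEnd ℂ) a * (c * blp b z)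
      = (Q.eval z - (starRingEnd ℂ) a * c * P.eval z) / Q.eval z := by
    rw [hblp]
    field_simp
  rw [hnum, hden, div_div_div_cancel_right₀ hQz]
  rw [hfact z, hDE z, mul_div_mul_comm]
  congr 1
  rw [blp, Finset.prod_div_distrib]

lemma mem_ball_abs {z : ℂ} : z ∈ Metric.ball (0:ℂ) 1 ↔ ‖z‖ < 1 := by
  rw [mem_ball_zero_iff]

lemma isBlaschke_iff {d : ℕ} {B : ℂ → ℂ} :
    IsBlaschke d B ↔ ∃ c : ℂ, ‖c‖ = 1 ∧ ∃ e : Fin d → ℂ,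
      (∀ j, ‖e j‖ < 1) ∧ ∀ z ∈ Metric.ball (0:ℂ) 1, B z = c * blp e z := by
  constructor
  · rintro ⟨θ, a, ha, h⟩
    exact ⟨Complex.exp (θ * Complex.I), Complex.norm_exp_ofReal_mul_I θ, a, ha,
      fun z hz => by rw [h z hz]; rfl⟩
  · rintro ⟨c, hc, e, he, h⟩
    refine ⟨c.arg, e, he, fun z hz => ?_⟩
    rw [h z hz]
    conv_lhs => rw [← Complex.norm_mul_exp_arg_mul_I c]
    rw [hc]
    simp [blp]

lemma hdq_diag {f : ℂ → ℂ} {w : ℂ} (hf : HolSelfDisk f) (hw : w ∈ Metric.ball (0:ℂ) 1)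
    {h : ℂ → ℂ} (hcont : ContinuousAt h w)
    (heq : ∀ z ∈ Metric.ball (0:ℂ) 1, z ≠ w → hdq f w z = h z) :
    hdq f w w = h w := by
  have hwd : DifferentiableAt ℂ f w := hf.1.differentiableAt (isOpen_ball.mem_nhds hw)
  have hfw : ‖f w‖ < 1 := mem_ball_abs.mp (hf.2 hw)
  have hwa : ‖w‖ < 1 := mem_ball_abs.mp hw
  have hs : Tendsto (slope f w) (𝓝[≠] w) (𝓝 (deriv f w)) :=
    hasDerivAt_iff_tendsto_slope.mp hwd.hasDerivAt
  have h1 : Tendsto (fun z => 1 - (starRingEnd ℂ) w * z) (𝓝[≠] w)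
      (𝓝 (1 - (starRingEnd ℂ) w * w)) :=
    ((continuous_const.sub (continuous_const.mul continuous_id)).tendsto w).mono_left
      nhdsWithin_le_nhds
  have h2 : Tendsto (fun z => 1 - (starRingEnd ℂ) (f w) * f z) (𝓝[≠] w)
      (𝓝 (1 - (starRingEnd ℂ) (f w) * f w)) :=
    (continuousAt_const.sub (continuousAt_const.mul hwd.continuousAt)).tendsto.mono_left
      nhdsWithin_le_nhds
  have hden : 1 - (starRingEnd ℂ) (f w) * f w ≠ 0 := denom_ne hfw hfw.le
  have T : Tendsto (hdq f w) (𝓝[≠] w)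
      (𝓝 (deriv f w * (1 - (starRingEnd ℂ) w * w) / (1 - (starRingEnd ℂ) (f w) * f w))) := by
    refine Filter.Tendsto.congr' ?_ ((hs.mul h1).div h2 hden)
    filter_upwards [self_mem_nhdsWithin] with z hz
    have hzw : z ≠ w := hz
    simp only [Pi.div_apply]
    rw [hdq, if_neg hzw, slope_def_field, div_div_div_comm, div_div_eq_mul_div]
  have T2 : Tendsto (hdq f w) (𝓝[≠] w) (𝓝 (h w)) := by
    refine Filter.Tendsto.congr' ?_ (hcont.tendsto.mono_left nhdsWithin_le_nhds)
    have hball : ∀ᶠ z in 𝓝[≠] w, z ∈ Metric.ball (0:ℂ) 1 :=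
      eventually_nhdsWithin_of_eventually_nhds (isOpen_ball.eventually_mem hw)
    filter_upwards [hball, self_mem_nhdsWithin] with z h1 h2
    exact (heq z h1 h2).symm
  have key := tendsto_nhds_unique T T2
  rw [hdq, if_pos rfl, ← key]
  congr 1
  · congr 1
    rw [mul_comm, Complex.mul_conj, Complex.normSq_eq_norm_sq]
    push_cast
    ring
  · rw [mul_comm ((starRingEnd ℂ) (f w)), Complex.mul_conj, Complex.normSq_eq_norm_sq]
    push_cast
    ring

lemma forward {d : ℕ} {f : ℂ → ℂ} (hf : HolSelfDisk f) (hB : IsBlaschke (d + 1) f)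
    {w : ℂ} (hw : w ∈ Metric.ball (0:ℂ) 1) : IsBlaschke d (hdq f w) := by
  obtain ⟨c, hc, b, hb, hfe⟩ := isBlaschke_iff.mp hB
  have hwa : ‖w‖ < 1 := mem_ball_abs.mp hw
  have hfw : ‖f w‖ < 1 := mem_ball_abs.mp (hf.2 hw)
  obtain ⟨c', hc', e, he, hg⟩ := mobius_blp hc hfw hb
  have hgz : ∀ z ∈ Metric.ball (0:ℂ) 1,
      (f z - f w) / (1 - (starRingEnd ℂ) (f w) * f z) = c' * blp e z := by
    intro z hz
    have h1 := hg z (mem_ball_abs.mp hz)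
    rw [← hfe z hz] at h1
    exact h1
  have hc'ne : c' ≠ 0 := fun hh => by simp [hh] at hc'
  have h0 : blp e w = 0 := by
    have := hgz w hw
    simp only [sub_self, zero_div] at this
    exact (mul_eq_zero.mp this.symm).resolve_left hc'ne
  obtain ⟨k, -, hk⟩ := Finset.prod_eq_zero_iff.mp h0
  have hek : e k = w := by
    rcases div_eq_zero_iff.mp hk with h | h
    · exact (sub_eq_zero.mp h).symm
    · exact absurd h (denom_ne (he k) hwa.le)
  set e' : Fin d → ℂ := fun j => e (k.succAbove j) with he'def
  have he' : ∀ j, ‖e' j‖ < 1 := fun j => he _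
  have hsplit : ∀ z : ℂ, blp e z = ((z - w) / (1 - (starRingEnd ℂ) w * z)) * blp e' z := by
    intro z
    rw [blp, Fin.prod_univ_succAbove _ k, hek]
    rfl
  have hne : ∀ z ∈ Metric.ball (0:ℂ) 1, z ≠ w → hdq f w z = c' * blp e' z := by
    intro z hz hzw
    have hγ : (z - w) / (1 - (starRingEnd ℂ) w * z) ≠ 0 :=
      div_ne_zero (sub_ne_zero.mpr hzw) (denom_ne hwa (mem_ball_abs.mp hz).le)
    rw [hdq, if_neg hzw, hgz z hz, hsplit z,
      show c' * ((z - w) / (1 - (starRingEnd ℂ) w * z) * blp e' z)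
        = (c' * blp e' z) * ((z - w) / (1 - (starRingEnd ℂ) w * z)) by ring,
      mul_div_cancel_right₀ _ hγ]
  have hcont : ContinuousAt (fun z => c' * blp e' z) w := by
    refine continuousAt_const.mul ?_
    have : ∀ j : Fin d, ContinuousAt (fun z => (z - e' j) / (1 - (starRingEnd ℂ) (e' j) * z)) w :=
      fun j => ContinuousAt.div (continuousAt_id.sub continuousAt_const)
        (continuousAt_const.sub (continuousAt_const.mul continuousAt_id))
        (denom_ne (he' j) hwa.le)
    exact tendsto_finset_prod _ fun j _ => this j
  have hdiag := hdq_diag hf hw hcont hne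
  refine isBlaschke_iff.mpr ⟨c', hc', e', he', fun z hz => ?_⟩
  by_cases hzw : z = w
  · subst hzw; exact hdiag
  · exact hne z hz hzw

lemma backward {d : ℕ} {f : ℂ → ℂ} (hf : HolSelfDisk f) {w₀ : ℂ}
    (hw : w₀ ∈ Metric.ball (0:ℂ) 1) (hB : IsBlaschke d (hdq f w₀)) :
    IsBlaschke (d + 1) f := by
  obtain ⟨c, hc, b, hb, hq⟩ := isBlaschke_iff.mp hB
  have hwa : ‖w₀‖ < 1 := mem_ball_abs.mp hw
  have hfw : ‖f w₀‖ < 1 := mem_ball_abs.mp (hf.2 hw)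
  set b' : Fin (d + 1) → ℂ := Fin.cons w₀ b with hb'def
  have hb' : ∀ j, ‖b' j‖ < 1 := by
    intro j
    refine Fin.cases ?_ ?_ j
    · simpa [hb'def] using hwa
    · intro i; simpa [hb'def] using hb i
  have hsplit : ∀ z : ℂ, blp b' z = ((z - w₀) / (1 - (starRingEnd ℂ) w₀ * z)) * blp b z := by
    intro z
    rw [blp, Fin.prod_univ_succ]
    simp only [hb'def, Fin.cons_zero, Fin.cons_succ]
    rfl
  have hfw' : ‖-(f w₀)‖ < 1 := by simpa using hfw
  obtain ⟨c', hc', e, he, hmo⟩ := mobius_blp (a := -(f w₀)) hc hfw'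
    hb'
  refine isBlaschke_iff.mpr ⟨c', hc', e, he, fun z hz => ?_⟩
  have hza : ‖z‖ < 1 := mem_ball_abs.mp hz
  have hmoz := hmo z hza
  rw [sub_neg_eq_add, map_neg, neg_mul, sub_neg_eq_add] at hmoz
  set G : ℂ := c * blp b' z with hGdef
  have hGle : ‖G‖ ≤ 1 := by
    rw [hGdef, norm_mul, hc, one_mul]
    exact blp_abs_le hb' hza
  have hden1 : 1 + (starRingEnd ℂ) (f w₀) * G ≠ 0 := by
    intro hh
    have h1 : (starRingEnd ℂ) (f w₀) * G = -1 := by linear_combination hh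
    have := congrArg norm h1
    rw [norm_mul, Complex.norm_conj] at this
    simp only [norm_neg, norm_one] at this
    nlinarith [norm_nonneg (f w₀), norm_nonneg G]
  suffices hsuff : f z = (G + f w₀) / (1 + (starRingEnd ℂ) (f w₀) * G) by
    rw [hsuff, hmoz]
  by_cases hzw : z = w₀
  · subst hzw
    have hG0 : G = 0 := by
      rw [hGdef, hsplit]
      simp
    rw [hG0]
    simp
  · have hγ : (z - w₀) / (1 - (starRingEnd ℂ) w₀ * z) ≠ 0 :=
      div_ne_zero (sub_ne_zero.mpr hzw) (denom_ne hwa hza.le)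
    have hq1 := hq z hz
    rw [hdq, if_neg hzw] at hq1
    have hDz : 1 - (starRingEnd ℂ) (f w₀) * f z ≠ 0 :=
      denom_ne hfw (mem_ball_abs.mp (hf.2 hz)).le
    have hgG : (f z - f w₀) / (1 - (starRingEnd ℂ) (f w₀) * f z) = G := by
      have h2 : (f z - f w₀) / (1 - (starRingEnd ℂ) (f w₀) * f z)
          = (c * blp b z) * ((z - w₀) / (1 - (starRingEnd ℂ) w₀ * z)) := by
        rw [← hq1, div_mul_cancel₀ _ hγ]
      rw [h2, hGdef, hsplit]
      ring
    have heq : f z - f w₀ = G * (1 - (starRingEnd ℂ) (f w₀) * f z) := by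
      rw [← hgG, div_mul_cancel₀ _ hDz]
    rw [eq_div_iff hden1]
    linear_combination heq

/-- `f` is a Blaschke product of degree `d ≥ 1` iff every (iff some) hyperbolic
difference quotient `f*(·,w)` is a Blaschke product of degree `d - 1`. -/
theorem stmt3 (f : ℂ → ℂ) (d : ℕ) (hd : 1 ≤ d) (hf : HolSelfDisk f) :
    (IsBlaschke d f ↔ ∀ w ∈ Metric.ball (0:ℂ) 1, IsBlaschke (d - 1) (hdq f w)) ∧
    (IsBlaschke d f ↔ ∃ w₀ ∈ Metric.ball (0:ℂ) 1, IsBlaschke (d - 1) (hdq f w₀)) := by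
  obtain ⟨m, rfl⟩ : ∃ m, d = m + 1 := ⟨d - 1, (Nat.succ_pred_eq_of_pos hd).symm⟩
  have h0 : (0:ℂ) ∈ Metric.ball (0:ℂ) 1 := Metric.mem_ball_self one_pos
  constructor
  · constructor
    · intro h w hw
      exact forward hf h hw
    · intro h
      exact backward hf h0 (h 0 h0)
  · constructor
    · intro h
      exact ⟨0, h0, forward hf h h0⟩
    · rintro ⟨w₀, hw, h⟩
      exact backward hf hw h
end
end

section
/- For f holomorphic from 𝔻 to 𝔻 and σ on the unit circle, the boundary dilation coefficient β_f(σ) = liminf_{z→σ} (1-|f(z)|)/(1-|z|) satisfies β_f(σ) = lim_{r→1⁻} (1-|f(rσ)|)/(1-r) = lim_{r→1⁻} (1-|f(rσ)|²)/(1-r²). -/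
open Complex Filter Set Metric Finset

noncomputable section

namespace JWC

def mob (a z : ℂ) : ℂ := (z - a) / (1 - (starRingEnd ℂ) a * z)

lemma den_ne {a z : ℂ} (ha : ‖a‖ < 1) (hz : ‖z‖ < 1) :
    (1 : ℂ) - (starRingEnd ℂ) a * z ≠ 0 := by
  intro h
  have h2 : (starRingEnd ℂ) a * z = 1 := by
    have := sub_eq_zero.mp h; linear_combination -this
  have h3 : ‖(starRingEnd ℂ) a * z‖ = 1 := by rw [h2]; simp
  rw [norm_mul, Complex.norm_conj] at h3
  nlinarith [norm_nonneg a, norm_nonneg z]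

lemma normSq_identity (a z : ℂ) :
    Complex.normSq (1 - (starRingEnd ℂ) a * z) - Complex.normSq (z - a)
      = (1 - Complex.normSq a) * (1 - Complex.normSq z) := by
  simp only [Complex.normSq_apply, Complex.sub_re, Complex.sub_im, Complex.mul_re,
    Complex.mul_im, Complex.conj_re, Complex.conj_im, Complex.one_re, Complex.one_im]
  ring

lemma one_sub_sq_mob {a z : ℂ} (ha : ‖a‖ < 1) (hz : ‖z‖ < 1) :
    1 - ‖mob a z‖ ^ 2
      = (1 - ‖a‖ ^ 2) * (1 - ‖z‖ ^ 2)
        / ‖1 - (starRingEnd ℂ) a * z‖ ^ 2 := by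
  have hd := den_ne ha hz
  have hdn : Complex.normSq (1 - (starRingEnd ℂ) a * z) ≠ 0 := by
    simpa [Complex.normSq_eq_zero] using hd
  rw [mob, norm_div, div_pow]
  simp only [Complex.sq_norm]
  rw [eq_div_iff hdn, sub_mul, div_mul_cancel₀ _ hdn]
  linear_combination normSq_identity a z

lemma sq_lt_one' {a : ℂ} (ha : ‖a‖ < 1) : ‖a‖ ^ 2 < 1 := by
  nlinarith [norm_nonneg a]

lemma mob_lt_one {a z : ℂ} (ha : ‖a‖ < 1) (hz : ‖z‖ < 1) :
    ‖mob a z‖ < 1 := by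
  have h := one_sub_sq_mob ha hz
  have ha2 := sq_lt_one' ha
  have hz2 := sq_lt_one' hz
  have hD : 0 < ‖1 - (starRingEnd ℂ) a * z‖ ^ 2 :=
    pow_pos (norm_pos_iff.mpr (den_ne ha hz)) 2
  have h1 : 0 < 1 - ‖mob a z‖ ^ 2 := by
    rw [h]
    exact div_pos (mul_pos (by linarith) (by linarith)) hD
  nlinarith [norm_nonneg (mob a z)]

lemma mob_mapsTo {a : ℂ} (ha : ‖a‖ < 1) :
    Set.MapsTo (mob a) (ball (0:ℂ) 1) (ball (0:ℂ) 1) := fun z hz => by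
  rw [mem_ball_zero_iff] at hz ⊢
  exact mob_lt_one ha hz

lemma self_den_ne {a : ℂ} (ha : ‖a‖ < 1) :
    (1:ℂ) - (starRingEnd ℂ) a * a ≠ 0 := den_ne ha ha

lemma mob_inv {a z : ℂ} (ha : ‖a‖ < 1) (hz : ‖z‖ < 1) :
    mob (-a) (mob a z) = z := by
  have hd := den_ne ha hz
  have hn := self_den_ne ha
  have hd' : 1 - z * (starRingEnd ℂ) a ≠ 0 := by rwa [mul_comm]
  have hn' : 1 - a * (starRingEnd ℂ) a ≠ 0 := by rwa [mul_comm]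
  have key1 : mob a z - -a
      = z * ((1:ℂ) - (starRingEnd ℂ) a * a) / (1 - (starRingEnd ℂ) a * z) := by
    rw [mob]; field_simp; ring
  have key2 : (1:ℂ) - (starRingEnd ℂ) (-a) * mob a z
      = ((1:ℂ) - (starRingEnd ℂ) a * a) / (1 - (starRingEnd ℂ) a * z) := by
    rw [mob, map_neg]; field_simp; ring
  rw [mob, key1, key2]
  field_simp

lemma mob_self (a : ℂ) : mob a a = 0 := by simp [mob]

lemma mob_diffOn {a : ℂ} (ha : ‖a‖ < 1) :
    DifferentiableOn ℂ (mob a) (ball (0:ℂ) 1) := by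
  apply DifferentiableOn.div (by fun_prop) (by fun_prop)
  intro z hz
  exact den_ne ha (mem_ball_zero_iff.mp hz)

/-- Schwarz–Pick lemma. -/
lemma schwarz_pick {f : ℂ → ℂ} (hd : DifferentiableOn ℂ f (ball (0:ℂ) 1))
    (hm : Set.MapsTo f (ball (0:ℂ) 1) (ball (0:ℂ) 1))
    {z w : ℂ} (hz : ‖z‖ < 1) (hw : ‖w‖ < 1) :
    ‖mob (f w) (f z)‖ ≤ ‖mob w z‖ := by
  have hwb : w ∈ ball (0:ℂ) 1 := mem_ball_zero_iff.mpr hw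
  have hfw : ‖f w‖ < 1 := mem_ball_zero_iff.mp (hm hwb)
  have hnw : ‖-w‖ < 1 := by rwa [norm_neg]
  set g : ℂ → ℂ := fun ζ => mob (f w) (f (mob (-w) ζ)) with hg
  have hgd : DifferentiableOn ℂ g (ball (0:ℂ) 1) := by
    apply DifferentiableOn.comp (mob_diffOn hfw)
      (DifferentiableOn.comp hd (mob_diffOn hnw) (mob_mapsTo hnw))
    exact (hm.comp (mob_mapsTo hnw))
  have hgm : Set.MapsTo g (ball (0:ℂ) 1) (ball (0:ℂ) 1) :=
    (mob_mapsTo hfw).comp (hm.comp (mob_mapsTo hnw))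
  have hg0 : g 0 = 0 := by
    have : mob (-w) 0 = w := by simp [mob]
    rw [hg]; simp only [this, mob_self]
  have hmz : ‖mob w z‖ < 1 := mob_lt_one hw hz
  have := Complex.norm_le_norm_of_mapsTo_ball hgd (hgm.mono_right ball_subset_closedBall) hg0 hmz
  rw [hg] at this
  simp only at this
  rwa [mob_inv hw hz] at this

end JWC

namespace JWC

set_option maxHeartbeats 1000000 in
lemma psi_le {f : ℂ → ℂ} (hd : DifferentiableOn ℂ f (ball (0:ℂ) 1))
    (hm : Set.MapsTo f (ball (0:ℂ) 1) (ball (0:ℂ) 1))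
    {z w : ℂ} (hz : ‖z‖ < 1) (hw : ‖w‖ < 1) :
    (1 - ‖f z‖) / (1 + ‖f z‖)
      * ((1 - ‖z‖ ^ 2) * (1 + ‖w‖)
          / (2 * ‖1 - (starRingEnd ℂ) w * z‖ ^ 2))
      ≤ (1 - ‖f w‖) / (1 - ‖w‖) := by
  have hP : ‖f z‖ < 1 := mem_ball_zero_iff.mp (hm (mem_ball_zero_iff.mpr hz))
  have hQ : ‖f w‖ < 1 := mem_ball_zero_iff.mp (hm (mem_ball_zero_iff.mpr hw))
  set A := ‖z‖ with hA
  set W := ‖w‖ with hW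
  set P := ‖f z‖ with hPd
  set Q := ‖f w‖ with hQd
  set D1 := ‖1 - (starRingEnd ℂ) w * z‖ with hD1
  set D2 := ‖1 - (starRingEnd ℂ) (f w) * (f z)‖ with hD2
  have hA0 : 0 ≤ A := norm_nonneg z
  have hW0 : 0 ≤ W := norm_nonneg w
  have hP0 : 0 ≤ P := norm_nonneg _
  have hQ0 : 0 ≤ Q := norm_nonneg _
  have hD1p : 0 < D1 := norm_pos_iff.mpr (den_ne hw hz)
  have hD2p : 0 < D2 := norm_pos_iff.mpr (den_ne hQ hP)
  -- Schwarz-Pick numeric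
  have hsp := schwarz_pick hd hm hz hw
  have hsp2 : ‖mob (f w) (f z)‖ ^ 2 ≤ ‖mob w z‖ ^ 2 :=
    pow_le_pow_left₀ (norm_nonneg _) hsp 2
  have e1 := one_sub_sq_mob hw hz
  have e2 := one_sub_sq_mob hQ hP
  have S : (1 - W ^ 2) * (1 - A ^ 2) / D1 ^ 2
      ≤ (1 - Q ^ 2) * (1 - P ^ 2) / D2 ^ 2 := by
    rw [← hD1, ← hD2] at *
    calc (1 - W ^ 2) * (1 - A ^ 2) / D1 ^ 2 = 1 - ‖mob w z‖ ^ 2 := e1.symm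
    _ ≤ 1 - ‖mob (f w) (f z)‖ ^ 2 := by linarith
    _ = (1 - Q ^ 2) * (1 - P ^ 2) / D2 ^ 2 := e2
  have Sc : (1 - W ^ 2) * (1 - A ^ 2) * D2 ^ 2 ≤ (1 - Q ^ 2) * (1 - P ^ 2) * D1 ^ 2 := by
    rw [div_le_div_iff₀ (by positivity) (by positivity)] at S
    linarith [S]
  have hD2P : 1 - P ≤ D2 := by
    have h1 : ‖(1:ℂ)‖ - ‖(starRingEnd ℂ) (f w) * (f z)‖
        ≤ D2 := by
      rw [hD2]; exact norm_sub_norm_le _ _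
    rw [norm_one, norm_mul, Complex.norm_conj] at h1
    nlinarith
  have hPle : (1 - P) ^ 2 ≤ D2 ^ 2 := by nlinarith
  have c1 : (1 - W ^ 2) * (1 - A ^ 2) * (1 - P) ^ 2
      ≤ (1 - Q ^ 2) * (1 - P ^ 2) * D1 ^ 2 := by
    have : (1 - W ^ 2) * (1 - A ^ 2) * (1 - P) ^ 2
        ≤ (1 - W ^ 2) * (1 - A ^ 2) * D2 ^ 2 := by
      apply mul_le_mul_of_nonneg_left hPle
      exact mul_nonneg (by nlinarith) (by nlinarith)
    linarith
  have c2 : (1 - Q ^ 2) * (1 - P ^ 2) * D1 ^ 2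
      ≤ 2 * (1 - Q) * ((1 - P) * (1 + P)) * D1 ^ 2 := by
    have h : (1 - Q ^ 2) * (1 - P ^ 2) ≤ 2 * (1 - Q) * ((1 - P) * (1 + P)) := by
      nlinarith [mul_nonneg (sq_nonneg (1 - Q)) (show (0:ℝ) ≤ 1 - P ^ 2 by nlinarith)]
    exact mul_le_mul_of_nonneg_right h (sq_nonneg D1)
  have T : (1 - W ^ 2) * (1 - A ^ 2) * (1 - P) ≤ 2 * (1 - Q) * (1 + P) * D1 ^ 2 := by
    have h3 : (1 - W ^ 2) * (1 - A ^ 2) * (1 - P) * (1 - P)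
        ≤ 2 * (1 - Q) * (1 + P) * D1 ^ 2 * (1 - P) := by
      calc (1 - W ^ 2) * (1 - A ^ 2) * (1 - P) * (1 - P)
          = (1 - W ^ 2) * (1 - A ^ 2) * (1 - P) ^ 2 := by ring
        _ ≤ (1 - Q ^ 2) * (1 - P ^ 2) * D1 ^ 2 := c1
        _ ≤ 2 * (1 - Q) * ((1 - P) * (1 + P)) * D1 ^ 2 := c2
        _ = 2 * (1 - Q) * (1 + P) * D1 ^ 2 * (1 - P) := by ring
    exact le_of_mul_le_mul_right h3 (by linarith)
  rw [div_mul_div_comm, div_le_div_iff₀ (by positivity) (by linarith : (0:ℝ) < 1 - W)]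
  calc (1 - P) * ((1 - A ^ 2) * (1 + W)) * (1 - W)
      = (1 - W ^ 2) * (1 - A ^ 2) * (1 - P) := by ring
    _ ≤ 2 * (1 - Q) * (1 + P) * D1 ^ 2 := T
    _ = (1 - Q) * ((1 + P) * (2 * D1 ^ 2)) := by ring

end JWC

namespace JWC

lemma den_ne1 {a z : ℂ} (ha : ‖a‖ ≤ 1) (hz : ‖z‖ < 1) :
    (1 : ℂ) - (starRingEnd ℂ) a * z ≠ 0 := by
  intro h
  have h2 : (starRingEnd ℂ) a * z = 1 := by
    have := sub_eq_zero.mp h; linear_combination -this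
  have h3 : ‖(starRingEnd ℂ) a * z‖ = 1 := by rw [h2]; simp
  rw [norm_mul, Complex.norm_conj] at h3
  nlinarith [norm_nonneg a, norm_nonneg z]

end JWC

open JWC

/-- The boundary dilation coefficient is the radial limit of `(1-|f(rσ)|)/(1-r)`
and also of `(1-|f(rσ)|²)/(1-r²)`. -/
theorem stmt4 (f : ℂ → ℂ) (σ : ℂ) (hf : HolSelfDisk f) (hσ : ‖σ‖ = 1) :
    Filter.Tendsto (fun r : ℝ =>
        (((1 - ‖f ((r : ℂ) * σ)‖) / (1 - r) : ℝ) : EReal))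
      (nhdsWithin 1 (Set.Iio 1)) (nhds (betaE f σ)) ∧
    Filter.Tendsto (fun r : ℝ =>
        (((1 - ‖f ((r : ℂ) * σ)‖ ^ 2) / (1 - r ^ 2) : ℝ) : EReal))
      (nhdsWithin 1 (Set.Iio 1)) (nhds (betaE f σ)) := by
  obtain ⟨hdiff, hmaps⟩ := hf
  set F := nhdsWithin σ (Metric.ball (0:ℂ) 1) with hF
  have hFne : F.NeBot := by
    rw [hF]
    apply mem_closure_iff_nhdsWithin_neBot.mp
    rw [closure_ball (0:ℂ) one_ne_zero, mem_closedBall_zero_iff]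
    simp [hσ]
  set R := nhdsWithin (1:ℝ) (Set.Iio 1) with hR
  have hIoo : ∀ᶠ r in R, r ∈ Set.Ioo (0:ℝ) 1 :=
    Ioo_mem_nhdsLT_of_mem (by constructor <;> norm_num)
  have habs : ∀ r ∈ Set.Ioo (0:ℝ) 1, ‖(Complex.ofReal r) * σ‖ = r := by
    intro r hr
    rw [norm_mul, Complex.norm_real, Real.norm_eq_abs, hσ, mul_one, abs_of_pos hr.1]
  have hmem : ∀ r ∈ Set.Ioo (0:ℝ) 1, ((Complex.ofReal r) * σ) ∈ Metric.ball (0:ℂ) 1 := by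
    intro r hr
    rw [mem_ball_zero_iff]
    show ‖_‖ < 1
    rw [habs r hr]
    exact hr.2
  have htendsm : Filter.Tendsto (fun r : ℝ => (Complex.ofReal r) * σ) R F := by
    rw [hF, tendsto_nhdsWithin_iff]
    constructor
    · have h1 : Filter.Tendsto (fun r : ℝ => (Complex.ofReal r) * σ) (nhds 1) (nhds (((1:ℝ):ℂ) * σ)) :=
        (Complex.continuous_ofReal.mul continuous_const).tendsto 1
      simp only [Complex.ofReal_one, one_mul] at h1
      exact h1.mono_left nhdsWithin_le_nhds
    · filter_upwards [hIoo] with r hr using hmem r hr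
  have hlb : ∀ c : ℝ, (c:EReal) < betaE f σ →
      ∀ᶠ r in R, c < (1 - ‖f ((Complex.ofReal r) * σ)‖) / (1 - r) := by
    intro c hc
    have h1 : ∀ᶠ w in F,
        (c:EReal) < (((1 - ‖f w‖) / (1 - ‖w‖) : ℝ) : EReal) :=
      Filter.eventually_lt_of_lt_liminf hc
    filter_upwards [htendsm.eventually h1, hIoo] with r hr hro
    rw [EReal.coe_lt_coe_iff] at hr
    rwa [habs r hro] at hr
  have hfr : ∀ r ∈ Set.Ioo (0:ℝ) 1, ‖f ((Complex.ofReal r) * σ)‖ < 1 := by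
    intro r hr
    have h := hmaps (hmem r hr)
    rw [mem_ball_zero_iff] at h
    exact h
  by_cases hL : betaE f σ = ⊤
  · rw [hL]
    constructor
    · rw [EReal.tendsto_nhds_top_iff_real]
      intro c
      filter_upwards [hlb c (by rw [hL]; exact EReal.coe_lt_top c)] with r hr
      exact EReal.coe_lt_coe_iff.mpr hr
    · rw [EReal.tendsto_nhds_top_iff_real]
      intro c
      filter_upwards [hlb (2*c) (by rw [hL]; exact EReal.coe_lt_top _), hIoo] with r hr hro
      rw [EReal.coe_lt_coe_iff]
      have hP := hfr r hro
      have hP0 : 0 ≤ ‖f ((Complex.ofReal r) * σ)‖ := norm_nonneg _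
      set P := ‖f ((Complex.ofReal r) * σ)‖
      obtain ⟨hr0, hr1⟩ := hro
      have e : (1 - P^2)/(1 - r^2) = ((1 - P)/(1 - r)) * ((1 + P)/(1 + r)) := by
        rw [div_mul_div_comm]
        congr 1 <;> ring
      rw [e]
      set g := (1 - P)/(1 - r) with hg
      have hg0 : 0 ≤ g := div_nonneg (by linarith) (by linarith)
      have hk : (1:ℝ)/2 ≤ (1 + P)/(1 + r) := by
        rw [div_le_div_iff₀ (by norm_num) (by linarith)]
        linarith
      nlinarith
  · -- finite case
    have hbeta : betaE f σ = Filter.liminf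
        (fun w => (((1 - ‖f w‖) / (1 - ‖w‖) : ℝ) : EReal)) F := by
      rw [hF]; rfl
    have hLnonneg : (0:EReal) ≤ betaE f σ := by
      rw [hbeta]
      apply Filter.le_liminf_of_le (by isBoundedDefault)
      filter_upwards [self_mem_nhdsWithin] with w hw
      have hw1 : ‖w‖ < 1 := by rw [mem_ball_zero_iff] at hw; exact hw
      have hfw1 : ‖f w‖ < 1 := by
        have h := hmaps hw; rw [mem_ball_zero_iff] at h; exact h
      have h0 : (0:ℝ) ≤ (1 - ‖f w‖) / (1 - ‖w‖) :=
        div_nonneg (by linarith) (by linarith)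
      exact_mod_cast h0
    have hbot : betaE f σ ≠ ⊥ := by
      intro h; rw [h] at hLnonneg; simp at hLnonneg
    set b := (betaE f σ).toReal with hbdef
    have hLb : ((b:ℝ):EReal) = betaE f σ := EReal.coe_toReal hL hbot
    have hb0 : (0:ℝ) ≤ b := by
      rw [← EReal.coe_le_coe_iff (x := 0) (y := b), hLb]
      exact_mod_cast hLnonneg
    have hA : ∀ z : ℂ, ‖z‖ < 1 →
        (1 - ‖f z‖) / (1 + ‖f z‖)
          * ((1 - ‖z‖ ^ 2) / ‖σ - z‖ ^ 2) ≤ b := by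
      intro z hz
      have hzσ : ‖σ - z‖ ≠ 0 := by
        rw [norm_ne_zero_iff, sub_ne_zero]
        intro h
        rw [← h] at hz
        rw [hσ] at hz
        exact lt_irrefl 1 hz
      have hconj : (starRingEnd ℂ) σ * σ = 1 := by
        have h1 : σ * (starRingEnd ℂ) σ = (Complex.normSq σ : ℂ) := Complex.mul_conj σ
        rw [mul_comm] at h1
        rw [h1]
        norm_cast
        rw [Complex.normSq_eq_norm_sq, hσ]
        norm_num
      have habsden : ‖1 - (starRingEnd ℂ) σ * z‖ = ‖σ - z‖ := by
        have h2 : (1:ℂ) - (starRingEnd ℂ) σ * z = (starRingEnd ℂ) σ * (σ - z) := by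
          rw [mul_sub, hconj]
        rw [h2, norm_mul, Complex.norm_conj, hσ, one_mul]
      set C1 := (1 - ‖f z‖) / (1 + ‖f z‖) with hC1
      set C2 := 1 - ‖z‖ ^ 2 with hC2
      have h1 : Filter.Tendsto (fun w : ℂ => C2 * (1 + ‖w‖)) (nhds σ)
          (nhds (C2 * (1 + ‖σ‖))) :=
        (continuous_const.mul (continuous_const.add continuous_norm)).tendsto σ
      have h2 : Filter.Tendsto
          (fun w : ℂ => 2 * ‖1 - (starRingEnd ℂ) w * z‖ ^ 2)
          (nhds σ) (nhds (2 * ‖1 - (starRingEnd ℂ) σ * z‖ ^ 2)) := by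
        apply Continuous.tendsto
        apply continuous_const.mul
        apply Continuous.pow
        exact continuous_norm.comp
          (continuous_const.sub (continuous_conj.mul continuous_const))
      have hne : 2 * ‖1 - (starRingEnd ℂ) σ * z‖ ^ 2 ≠ 0 := by
        rw [habsden]
        positivity
      have htend : Filter.Tendsto
          (fun w : ℂ => C1 * (C2 * (1 + ‖w‖)
            / (2 * ‖1 - (starRingEnd ℂ) w * z‖ ^ 2)))
          (nhds σ) (nhds (C1 * (C2 / ‖σ - z‖ ^ 2))) := by
        have hval : C1 * (C2 * (1 + ‖σ‖)
            / (2 * ‖1 - (starRingEnd ℂ) σ * z‖ ^ 2))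
            = C1 * (C2 / ‖σ - z‖ ^ 2) := by
          rw [habsden, hσ]
          congr 1
          rw [show (1:ℝ) + 1 = 2 by norm_num]
          rw [mul_comm C2 2, mul_div_mul_left _ _ (two_ne_zero)]
        rw [← hval]
        exact tendsto_const_nhds.mul (h1.div h2 hne)
      have htendE : Filter.Tendsto
          (fun w : ℂ => ((C1 * (C2 * (1 + ‖w‖)
            / (2 * ‖1 - (starRingEnd ℂ) w * z‖ ^ 2)) : ℝ) : EReal))
          F (nhds ((C1 * (C2 / ‖σ - z‖ ^ 2) : ℝ) : EReal)) :=
        EReal.tendsto_coe.mpr (htend.mono_left (by rw [hF]; exact nhdsWithin_le_nhds))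
      have hliminf1 : Filter.liminf
          (fun w : ℂ => ((C1 * (C2 * (1 + ‖w‖)
            / (2 * ‖1 - (starRingEnd ℂ) w * z‖ ^ 2)) : ℝ) : EReal)) F
          = ((C1 * (C2 / ‖σ - z‖ ^ 2) : ℝ) : EReal) :=
        htendE.liminf_eq
      have hle : Filter.liminf
          (fun w : ℂ => ((C1 * (C2 * (1 + ‖w‖)
            / (2 * ‖1 - (starRingEnd ℂ) w * z‖ ^ 2)) : ℝ) : EReal)) F
          ≤ betaE f σ := by
        rw [hbeta]
        refine Filter.liminf_le_liminf ?_ (by isBoundedDefault) (by isBoundedDefault)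
        filter_upwards [self_mem_nhdsWithin] with w hw
        have hw1 : ‖w‖ < 1 := by rw [mem_ball_zero_iff] at hw; exact hw
        exact EReal.coe_le_coe_iff.mpr (psi_le hdiff hmaps hz hw1)
      rw [hliminf1, ← hLb] at hle
      exact EReal.coe_le_coe_iff.mp hle
    have hgb : ∀ r ∈ Set.Ioo (0:ℝ) 1,
        (1 - ‖f (Complex.ofReal r * σ)‖) / (1 - r)
          ≤ b * ((1 + ‖f (Complex.ofReal r * σ)‖) / (1 + r)) := by
      intro r hr
      have hrz : ‖Complex.ofReal r * σ‖ < 1 := by rw [habs r hr]; exact hr.2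
      have h := hA _ hrz
      have habs2 : ‖σ - Complex.ofReal r * σ‖ = 1 - r := by
        have h3 : σ - Complex.ofReal r * σ = Complex.ofReal (1 - r) * σ := by
          push_cast; ring
        rw [h3, norm_mul, Complex.norm_real, Real.norm_eq_abs, hσ, mul_one,
          abs_of_pos (by linarith [hr.2] : (0:ℝ) < 1 - r)]
      rw [habs r hr, habs2] at h
      set P := ‖f (Complex.ofReal r * σ)‖ with hPdef
      have hP : P < 1 := hfr r hr
      have hP0 : 0 ≤ P := norm_nonneg _
      obtain ⟨hr0, hr1⟩ := hr
      rw [div_mul_div_comm, div_le_iff₀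
        (mul_pos (by linarith) (pow_pos (by linarith) 2))] at h
      have key : (1 - P) * (1 + r) ≤ b * ((1 + P) * (1 - r)) := by
        have h4 : ((1 - P) * (1 + r)) * (1 - r) ≤ (b * ((1 + P) * (1 - r))) * (1 - r) := by
          calc ((1 - P) * (1 + r)) * (1 - r) = (1 - P) * (1 - r ^ 2) := by ring
            _ ≤ b * ((1 + P) * (1 - r) ^ 2) := h
            _ = (b * ((1 + P) * (1 - r))) * (1 - r) := by ring
        exact le_of_mul_le_mul_right h4 (by linarith)
      rw [mul_div_assoc']
      rw [div_le_div_iff₀ (by linarith) (by linarith)]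
      calc (1 - P) * (1 + r) ≤ b * ((1 + P) * (1 - r)) := key
        _ = b * (1 + P) * (1 - r) := by ring
    have hPt : Filter.Tendsto (fun r : ℝ => ‖f (Complex.ofReal r * σ)‖)
        R (nhds 1) := by
      apply tendsto_of_tendsto_of_tendsto_of_le_of_le'
        (g := fun r : ℝ => 1 - 2 * b * (1 - r)) (h := fun _ : ℝ => (1:ℝ))
      · have h5 : Filter.Tendsto (fun r : ℝ => 1 - 2 * b * (1 - r)) (nhds 1)
            (nhds (1 - 2 * b * (1 - 1))) :=
          (continuous_const.sub
            (continuous_const.mul (continuous_const.sub continuous_id))).tendsto 1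
        simp only [sub_self, mul_zero, sub_zero] at h5
        exact h5.mono_left nhdsWithin_le_nhds
      · exact tendsto_const_nhds
      · filter_upwards [hIoo] with r hr
        have h1 := hgb r hr
        have hP := hfr r hr
        have hP0 : (0:ℝ) ≤ ‖f (Complex.ofReal r * σ)‖ := norm_nonneg _
        obtain ⟨hr0, hr1⟩ := hr
        have hk2 : (1 + ‖f (Complex.ofReal r * σ)‖) / (1 + r) ≤ 2 := by
          rw [div_le_iff₀ (by linarith)]
          linarith
        have hg2 : (1 - ‖f (Complex.ofReal r * σ)‖) / (1 - r) ≤ 2 * b :=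
          le_trans h1 (by nlinarith)
        rw [div_le_iff₀ (by linarith)] at hg2
        linarith
      · filter_upwards [hIoo] with r hr using (hfr r hr).le
    have hkt : Filter.Tendsto
        (fun r : ℝ => (1 + ‖f (Complex.ofReal r * σ)‖) / (1 + r))
        R (nhds 1) := by
      have hnum : Filter.Tendsto
          (fun r : ℝ => 1 + ‖f (Complex.ofReal r * σ)‖) R (nhds 2) := by
        have h5 : Filter.Tendsto
            (fun r : ℝ => 1 + ‖f (Complex.ofReal r * σ)‖) R (nhds (1 + 1)) :=
          tendsto_const_nhds.add hPt
        rwa [show (1:ℝ) + 1 = 2 by norm_num] at h5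
      have hden : Filter.Tendsto (fun r : ℝ => 1 + r) R (nhds 2) := by
        have h6 : Filter.Tendsto (fun r : ℝ => 1 + r) (nhds 1) (nhds (1 + 1)) :=
          tendsto_const_nhds.add tendsto_id
        rw [show (1:ℝ) + 1 = 2 by norm_num] at h6
        exact h6.mono_left nhdsWithin_le_nhds
      have h7 := hnum.div hden (by norm_num : (2:ℝ) ≠ 0)
      rwa [show (2:ℝ)/2 = 1 by norm_num] at h7
    have hgt : Filter.Tendsto
        (fun r : ℝ => (1 - ‖f (Complex.ofReal r * σ)‖) / (1 - r))
        R (nhds b) := by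
      rw [tendsto_order]
      constructor
      · intro c hc
        apply hlb c
        rw [← hLb]
        exact_mod_cast hc
      · intro c hc
        have hbk : Filter.Tendsto
            (fun r : ℝ => b * ((1 + ‖f (Complex.ofReal r * σ)‖) / (1 + r)))
            R (nhds b) := by
          have h8 := (tendsto_const_nhds (α := ℝ) (x := b) (f := R)).mul hkt
          rw [mul_one] at h8
          exact h8
        filter_upwards [hbk.eventually_lt_const hc, hIoo] with r h1 hr
        exact lt_of_le_of_lt (hgb r hr) h1
    have hht : Filter.Tendsto
        (fun r : ℝ => (1 - ‖f (Complex.ofReal r * σ)‖ ^ 2) / (1 - r ^ 2))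
        R (nhds b) := by
      have h9 := hgt.mul hkt
      rw [mul_one] at h9
      apply h9.congr'
      filter_upwards [hIoo] with r hr
      obtain ⟨hr0, hr1⟩ := hr
      rw [div_mul_div_comm]
      congr 1 <;> ring
    constructor
    · rw [← hLb]
      exact EReal.tendsto_coe.mpr hgt
    · rw [← hLb]
      exact EReal.tendsto_coe.mpr hht
end
end

section
/- Let f ∈ Hol(𝔻,𝔻) with β_f(σ) < +∞ at some σ ∈ ∂𝔻. Then β_f(σ) ≥ (2/(1+|f^h(0)|)) · |f(σ)-f(0)|²/(1-|f(0)|²) ≥ (2/(1+|f^h(0)|)) · (1-|f(0)|)/(1+|f(0)|), where f^h(0) = f'(0)(1-|0|²)/(1-|f(0)|²) = f'(0)/(1-|f(0)|²) is the hyperbolic derivative at 0. -/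
open Complex Filter Set Metric Finset

noncomputable section

section JWCAux

lemma jwc_ne (w z : ℂ) (hw : ‖w‖ < 1) (hz : ‖z‖ ≤ 1) :
    1 - (starRingEnd ℂ) w * z ≠ 0 := by
  intro h
  have h1 : (1:ℂ) = (starRingEnd ℂ) w * z := by linear_combination h
  have := congrArg norm h1
  simp only [norm_mul, norm_one, Complex.norm_conj] at this
  nlinarith [norm_nonneg w, norm_nonneg z]

lemma jwc_id (w z : ℂ) :
    ‖1 - (starRingEnd ℂ) w * z‖ ^ 2 - ‖z - w‖ ^ 2
      = (1 - ‖w‖ ^ 2) * (1 - ‖z‖ ^ 2) := by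
  simp only [Complex.sq_norm, Complex.normSq_apply, Complex.sub_re, Complex.sub_im,
    Complex.mul_re, Complex.mul_im, Complex.one_re, Complex.one_im,
    Complex.conj_re, Complex.conj_im]
  ring

/-- Möbius transform of the disk. -/
def moeb (w z : ℂ) : ℂ := (z - w) / (1 - (starRingEnd ℂ) w * z)

lemma moeb_abs_lt (w z : ℂ) (hw : ‖w‖ < 1) (hz : ‖z‖ < 1) :
    ‖moeb w z‖ < 1 := by
  have hne := jwc_ne w z hw hz.le
  have hpos : 0 < ‖1 - (starRingEnd ℂ) w * z‖ := by
    simpa [norm_pos_iff] using hne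
  have hid := jwc_id w z
  rw [moeb, norm_div, div_lt_one hpos]
  by_contra hcon
  push_neg at hcon
  have h2 : ‖1 - (starRingEnd ℂ) w * z‖ ^ 2 ≤ ‖z - w‖ ^ 2 :=
    pow_le_pow_left₀ hpos.le hcon 2
  have h3 : 0 < (1 - ‖w‖ ^ 2) * (1 - ‖z‖ ^ 2) :=
    mul_pos (by nlinarith [norm_nonneg w]) (by nlinarith [norm_nonneg z])
  linarith

lemma moeb_mapsTo {w : ℂ} (hw : ‖w‖ < 1) :
    Set.MapsTo (moeb w) (Metric.ball (0:ℂ) 1) (Metric.ball (0:ℂ) 1) := fun z hz => by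
  rw [mem_ball_zero_iff] at hz ⊢
  exact moeb_abs_lt w z hw hz

lemma moeb_diff {w : ℂ} (hw : ‖w‖ < 1) :
    DifferentiableOn ℂ (moeb w) (Metric.ball (0:ℂ) 1) := by
  intro z hz
  rw [mem_ball_zero_iff] at hz
  exact ((differentiable_id.sub_const w).differentiableAt.differentiableWithinAt).div
    (((differentiable_const _).mul differentiable_id).const_sub 1).differentiableAt.differentiableWithinAt
    (jwc_ne w z hw hz.le)

lemma moeb_inv {w z : ℂ} (hw : ‖w‖ < 1) (hz : ‖z‖ < 1) :
    moeb (-w) (moeb w z) = z := by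
  have h1 := jwc_ne w z hw hz.le
  have h2 : 1 - (starRingEnd ℂ) (-w) * moeb w z
      = (1 - (starRingEnd ℂ) w * w) / (1 - (starRingEnd ℂ) w * z) := by
    rw [moeb, map_neg]
    field_simp
    ring
  have h3 : (1:ℂ) - (starRingEnd ℂ) w * w ≠ 0 := jwc_ne w w hw hw.le
  rw [moeb, h2, moeb]
  have h1' : 1 - z * (starRingEnd ℂ) w ≠ 0 := by rwa [mul_comm]
  have h3' : 1 - w * (starRingEnd ℂ) w ≠ 0 := by rwa [mul_comm]
  field_simp
  ring

/-- Schwarz–Pick, cross-multiplied form. -/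
lemma schwarz_pick {f : ℂ → ℂ} (hd : DifferentiableOn ℂ f (Metric.ball (0:ℂ) 1))
    (hm : Set.MapsTo f (Metric.ball (0:ℂ) 1) (Metric.ball (0:ℂ) 1))
    {w z : ℂ} (hw : ‖w‖ < 1) (hz : ‖z‖ < 1) :
    ‖f z - f w‖ * ‖1 - (starRingEnd ℂ) w * z‖
      ≤ ‖z - w‖ * ‖1 - (starRingEnd ℂ) (f w) * f z‖ := by
  have hwb : w ∈ Metric.ball (0:ℂ) 1 := mem_ball_zero_iff.2 hw
  have hzb : z ∈ Metric.ball (0:ℂ) 1 := mem_ball_zero_iff.2 hz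
  have hfw : ‖f w‖ < 1 := mem_ball_zero_iff.1 (hm hwb)
  have hfz : ‖f z‖ < 1 := mem_ball_zero_iff.1 (hm hzb)
  set G : ℂ → ℂ := fun ζ => moeb (f w) (f (moeb (-w) ζ)) with hG
  have hnw : ‖-w‖ < 1 := by rwa [norm_neg]
  have hGd : DifferentiableOn ℂ G (Metric.ball (0:ℂ) 1) :=
    ((moeb_diff hfw).comp (hd.comp (moeb_diff hnw) (moeb_mapsTo hnw))
      (hm.comp (moeb_mapsTo hnw)))
  have hGm : Set.MapsTo G (Metric.ball (0:ℂ) 1) (Metric.ball (0:ℂ) 1) :=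
    (moeb_mapsTo hfw).comp (hm.comp (moeb_mapsTo hnw))
  have hG0 : G 0 = 0 := by
    have : moeb (-w) 0 = w := by simp [moeb]
    simp [hG, this, moeb]
  have key : ‖G (moeb w z)‖ ≤ ‖moeb w z‖ :=
    Complex.norm_le_norm_of_mapsTo_ball hGd (hGm.mono_right ball_subset_closedBall) hG0 (moeb_abs_lt w z hw hz)
  rw [hG] at key
  simp only [moeb_inv hw hz] at key
  have d1 : 0 < ‖1 - (starRingEnd ℂ) (f w) * f z‖ :=
    norm_pos_iff.mpr (jwc_ne (f w) (f z) hfw hfz.le)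
  have d2 : 0 < ‖1 - (starRingEnd ℂ) w * z‖ :=
    norm_pos_iff.mpr (jwc_ne w z hw hz.le)
  rw [moeb, moeb, norm_div, norm_div, div_le_div_iff₀ d1 d2] at key
  linarith

/-- Julia-type cross inequality. -/
lemma julia_pt {f : ℂ → ℂ} (hd : DifferentiableOn ℂ f (Metric.ball (0:ℂ) 1))
    (hm : Set.MapsTo f (Metric.ball (0:ℂ) 1) (Metric.ball (0:ℂ) 1))
    {w z : ℂ} (hw : ‖w‖ < 1) (hz : ‖z‖ < 1) :
    (1 - ‖z‖ ^ 2) * (1 - ‖w‖ ^ 2)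
        * ‖1 - (starRingEnd ℂ) (f w) * f z‖ ^ 2
      ≤ (1 - ‖f z‖ ^ 2) * (1 - ‖f w‖ ^ 2)
        * ‖1 - (starRingEnd ℂ) w * z‖ ^ 2 := by
  have hfw : ‖f w‖ < 1 := mem_ball_zero_iff.1 (hm (mem_ball_zero_iff.2 hw))
  have hfz : ‖f z‖ < 1 := mem_ball_zero_iff.1 (hm (mem_ball_zero_iff.2 hz))
  have hsp := schwarz_pick hd hm hw hz
  have h2 : (‖f z - f w‖ * ‖1 - (starRingEnd ℂ) w * z‖) ^ 2
      ≤ (‖z - w‖ * ‖1 - (starRingEnd ℂ) (f w) * f z‖) ^ 2 :=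
    pow_le_pow_left₀ (by positivity) hsp 2
  have e1 := jwc_id (f w) (f z)
  have e2 := jwc_id w z
  nlinarith [h2, e1, e2, sq_nonneg (‖f z - f w‖), sq_nonneg (‖z - w‖)]

/-- monotonicity of the pseudo-hyperbolic distance under taking absolute values -/
lemma mono_abs (u v : ℂ) (hu : ‖u‖ ≤ 1) (hv : ‖v‖ ≤ 1) :
    (‖u‖ - ‖v‖) * ‖1 - (starRingEnd ℂ) v * u‖
      ≤ ‖u - v‖ * (1 - ‖u‖ * ‖v‖) := by
  set s := ‖u‖
  set c := ‖v‖
  have hs0 : 0 ≤ s := norm_nonneg u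
  have hc0 : 0 ≤ c := norm_nonneg v
  have hsc : 0 ≤ 1 - s * c := by nlinarith
  rcases le_or_gt s c with h | h
  · exact le_trans (mul_nonpos_of_nonpos_of_nonneg (by linarith) (norm_nonneg _))
      (mul_nonneg (norm_nonneg _) hsc)
  · have habs : s - c ≤ ‖u - v‖ := by
      calc s - c ≤ |s - c| := le_abs_self _
      _ ≤ ‖u - v‖ := by
        simpa using abs_norm_sub_norm_le u v
    have e1 := jwc_id v u
    have hsq : ((s - c) * ‖1 - (starRingEnd ℂ) v * u‖) ^ 2
        ≤ (‖u - v‖ * (1 - s * c)) ^ 2 := by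
      have h4 : (s - c) ^ 2 ≤ ‖u - v‖ ^ 2 :=
        pow_le_pow_left₀ (by linarith) habs 2
      have h5 : (0:ℝ) ≤ (1 - s ^ 2) * (1 - c ^ 2) := mul_nonneg (by nlinarith) (by nlinarith)
      nlinarith [mul_nonneg h5 (sub_nonneg.2 h4)]
    have h1 : 0 ≤ (s - c) * ‖1 - (starRingEnd ℂ) v * u‖ :=
      mul_nonneg (by linarith) (norm_nonneg _)
    have h2 : 0 ≤ ‖u - v‖ * (1 - s * c) :=
      mul_nonneg (norm_nonneg _) hsc
    exact (pow_le_pow_iff_left₀ h1 h2 two_ne_zero).1 hsq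

/-- Schwarz–Pick bound at the origin for a map into the closed disk. -/
lemma bound_sp0 {g : ℂ → ℂ} (hd : DifferentiableOn ℂ g (Metric.ball (0:ℂ) 1))
    (hb : ∀ x ∈ Metric.ball (0:ℂ) 1, ‖g x‖ ≤ 1)
    {z : ℂ} (hz : ‖z‖ < 1) :
    ‖g z‖ * (1 + ‖g 0‖ * ‖z‖)
      ≤ ‖g 0‖ + ‖z‖ := by
  have h0 : (0:ℂ) ∈ Metric.ball (0:ℂ) 1 := mem_ball_self one_pos
  have hzb : z ∈ Metric.ball (0:ℂ) 1 := mem_ball_zero_iff.2 hz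
  have hgz := hb z hzb
  have hg0 := hb 0 h0
  have key : ∀ t : ℝ, t ∈ Set.Ioo (0:ℝ) 1 →
      t * ‖g z‖ + ‖z‖ * (t ^ 2 * (‖g z‖ * ‖g 0‖))
        ≤ t * ‖g 0‖ + ‖z‖ := by
    intro t ht
    set gt : ℂ → ℂ := fun x => (t : ℂ) * g x with hgt
    have habs : ∀ x, ‖gt x‖ = t * ‖g x‖ := fun x => by
      simp [hgt, norm_mul, Complex.norm_real, Real.norm_eq_abs, abs_of_pos ht.1]
    have hgtd : DifferentiableOn ℂ gt (Metric.ball (0:ℂ) 1) :=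
      fun x hx => ((hd x hx).const_mul _)
    have hgtm : Set.MapsTo gt (Metric.ball (0:ℂ) 1) (Metric.ball (0:ℂ) 1) := fun x hx => by
      rw [mem_ball_zero_iff, habs]
      nlinarith [hb x hx, ht.1, ht.2, norm_nonneg (g x)]
    have h01 : ‖(0:ℂ)‖ < 1 := by simp
    have hsp := schwarz_pick hgtd hgtm h01 hz
    simp only [map_zero, zero_mul, sub_zero, norm_one, mul_one] at hsp
    have hgtz1 : ‖gt z‖ ≤ 1 := by rw [habs]; nlinarith [ht.1.le, ht.2.le]
    have hgt01 : ‖gt 0‖ ≤ 1 := by rw [habs]; nlinarith [ht.1.le, ht.2.le]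
    have hgt0lt : ‖gt 0‖ < 1 := by
      rw [habs]; nlinarith [ht.1, ht.2, norm_nonneg (g 0)]
    have hmono := mono_abs (gt z) (gt 0) hgtz1 hgt01
    have hC : 0 < ‖1 - (starRingEnd ℂ) (gt 0) * gt z‖ :=
      norm_pos_iff.mpr (jwc_ne (gt 0) (gt z) hgt0lt hgtz1)
    have hsc : 0 ≤ 1 - ‖gt z‖ * ‖gt 0‖ := by
      nlinarith [norm_nonneg (gt z), norm_nonneg (gt 0)]
    have comb : (‖gt z‖ - ‖gt 0‖)
          * ‖1 - (starRingEnd ℂ) (gt 0) * gt z‖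
        ≤ (‖z‖ * ‖1 - (starRingEnd ℂ) (gt 0) * gt z‖)
          * (1 - ‖gt z‖ * ‖gt 0‖) :=
      le_trans hmono (mul_le_mul_of_nonneg_right hsp hsc)
    have final : ‖gt z‖ - ‖gt 0‖
        ≤ ‖z‖ * (1 - ‖gt z‖ * ‖gt 0‖) := by
      have := (mul_le_mul_iff_of_pos_right hC).1 (by linarith [comb] :
        (‖gt z‖ - ‖gt 0‖)
          * ‖1 - (starRingEnd ℂ) (gt 0) * gt z‖
        ≤ (‖z‖ * (1 - ‖gt z‖ * ‖gt 0‖))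
          * ‖1 - (starRingEnd ℂ) (gt 0) * gt z‖)
      exact this
    rw [habs, habs] at final
    nlinarith [final]
  haveI hne : (nhdsWithin (1:ℝ) (Set.Ioo (0:ℝ) 1)).NeBot := by
    refine mem_closure_iff_nhdsWithin_neBot.1 ?_
    rw [closure_Ioo one_ne_zero.symm]
    exact ⟨zero_le_one, le_rfl⟩
  have hLc : Continuous (fun t : ℝ => t * ‖g z‖
      + ‖z‖ * (t ^ 2 * (‖g z‖ * ‖g 0‖))) := by continuity
  have hRc : Continuous (fun t : ℝ => t * ‖g 0‖ + ‖z‖) := by continuity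
  have hL := (hLc.tendsto 1).mono_left (nhdsWithin_le_nhds (s := Set.Ioo (0:ℝ) 1))
  have hR := (hRc.tendsto 1).mono_left (nhdsWithin_le_nhds (s := Set.Ioo (0:ℝ) 1))
  have hle := le_of_tendsto_of_tendsto hL hR
    (eventually_mem_nhdsWithin.mono fun t ht => key t ht)
  simp only [one_mul, one_pow] at hle
  nlinarith [hle]

/-- The normalized map `T_{f 0} ∘ f`. -/
def Fm (f : ℂ → ℂ) : ℂ → ℂ := fun z => (f z - f 0) / (1 - (starRingEnd ℂ) (f 0) * f z)

/-- The hyperbolic difference quotient of `f` based at `0`. -/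
def gm (f : ℂ → ℂ) : ℂ → ℂ := dslope (Fm f) 0

lemma Fm_zero {f : ℂ → ℂ} : Fm f 0 = 0 := by simp [Fm]

lemma Fm_diff {f : ℂ → ℂ} (hd : DifferentiableOn ℂ f (Metric.ball (0:ℂ) 1))
    (hm : Set.MapsTo f (Metric.ball (0:ℂ) 1) (Metric.ball (0:ℂ) 1)) :
    DifferentiableOn ℂ (Fm f) (Metric.ball (0:ℂ) 1) := by
  have ha : ‖f 0‖ < 1 := by
    simpa [mem_ball_zero_iff] using hm (mem_ball_self one_pos)
  intro z hz
  have hfz : ‖f z‖ < 1 := by simpa [mem_ball_zero_iff] using hm hz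
  exact ((hd z hz).sub (differentiableWithinAt_const _)).div
    ((differentiableWithinAt_const _).sub ((hd z hz).const_mul _))
    (jwc_ne (f 0) (f z) ha hfz.le)

lemma Fm_maps {f : ℂ → ℂ}
    (hm : Set.MapsTo f (Metric.ball (0:ℂ) 1) (Metric.ball (0:ℂ) 1)) :
    Set.MapsTo (Fm f) (Metric.ball (0:ℂ) 1) (Metric.ball (0:ℂ) 1) := by
  have ha : ‖f 0‖ < 1 := by
    simpa [mem_ball_zero_iff] using hm (mem_ball_self one_pos)
  intro z hz
  have hfz : ‖f z‖ < 1 := by simpa [mem_ball_zero_iff] using hm hz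
  simpa [mem_ball_zero_iff, Fm, moeb] using moeb_abs_lt (f 0) (f z) ha hfz

lemma gm_diff {f : ℂ → ℂ} (hd : DifferentiableOn ℂ f (Metric.ball (0:ℂ) 1))
    (hm : Set.MapsTo f (Metric.ball (0:ℂ) 1) (Metric.ball (0:ℂ) 1)) :
    DifferentiableOn ℂ (gm f) (Metric.ball (0:ℂ) 1) :=
  (differentiableOn_dslope (isOpen_ball.mem_nhds (mem_ball_self one_pos))).mpr (Fm_diff hd hm)

lemma gm_bdd {f : ℂ → ℂ} (hd : DifferentiableOn ℂ f (Metric.ball (0:ℂ) 1))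
    (hm : Set.MapsTo f (Metric.ball (0:ℂ) 1) (Metric.ball (0:ℂ) 1)) :
    ∀ z ∈ Metric.ball (0:ℂ) 1, ‖gm f z‖ ≤ 1 := by
  intro z hz
  have h := Complex.norm_dslope_le_div_of_mapsTo_ball (Fm_diff hd hm)
    (by rw [Fm_zero]; exact (Fm_maps hm).mono_right ball_subset_closedBall) hz
  simpa [gm] using h

lemma Fm_eq_mul {f : ℂ → ℂ} : ∀ z : ℂ, Fm f z = z * gm f z := by
  intro z
  rcases eq_or_ne z 0 with rfl | hzne
  · simp [Fm]
  · rw [gm, dslope_of_ne _ hzne, slope_def_field]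
    field_simp [Fm_zero]
    rw [Fm_zero]; ring

lemma gm_zero {f : ℂ → ℂ} (hd : DifferentiableOn ℂ f (Metric.ball (0:ℂ) 1))
    (hm : Set.MapsTo f (Metric.ball (0:ℂ) 1) (Metric.ball (0:ℂ) 1)) :
    gm f 0 = deriv f 0 / ((1 - ‖f 0‖ ^ 2 : ℝ) : ℂ) := by
  have ha : ‖f 0‖ < 1 := by
    simpa [mem_ball_zero_iff] using hm (mem_ball_self one_pos)
  have hne : 1 - (starRingEnd ℂ) (f 0) * f 0 ≠ 0 := jwc_ne (f 0) (f 0) ha ha.le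
  have hfd : DifferentiableAt ℂ f 0 :=
    hd.differentiableAt (isOpen_ball.mem_nhds (mem_ball_self one_pos))
  have h1 : HasDerivAt f (deriv f 0) 0 := hfd.hasDerivAt
  have hnum : HasDerivAt (fun z => f z - f 0) (deriv f 0) 0 := h1.sub_const _
  have hden : HasDerivAt (fun z => 1 - (starRingEnd ℂ) (f 0) * f z)
      (-((starRingEnd ℂ) (f 0) * deriv f 0)) 0 := (h1.const_mul _).const_sub 1
  have hF : HasDerivAt (Fm f)
      ((deriv f 0 * (1 - (starRingEnd ℂ) (f 0) * f 0)
        - (f 0 - f 0) * -((starRingEnd ℂ) (f 0) * deriv f 0))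
        / (1 - (starRingEnd ℂ) (f 0) * f 0) ^ 2) 0 := hnum.div hden hne
  have hcast : ((1 - ‖f 0‖ ^ 2 : ℝ) : ℂ) = 1 - (starRingEnd ℂ) (f 0) * f 0 := by
    rw [Complex.ofReal_sub, Complex.ofReal_one, ← Complex.normSq_eq_norm_sq, ← Complex.mul_conj]
    ring
  rw [gm, dslope_same, hF.deriv, hcast]
  field_simp
  ring

set_option maxHeartbeats 800000 in
/-- The main pointwise chain inequality. -/
lemma chain_ineq {f : ℂ → ℂ} (hd : DifferentiableOn ℂ f (Metric.ball (0:ℂ) 1))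
    (hm : Set.MapsTo f (Metric.ball (0:ℂ) 1) (Metric.ball (0:ℂ) 1))
    {z : ℂ} (hz : z ∈ Metric.ball (0:ℂ) 1) :
    (1 + ‖z‖) * ((1 + ‖gm f 0‖ * ‖z‖) ^ 2
        + ‖z‖ ^ 2 * (1 - ‖gm f 0‖ ^ 2))
      * ‖1 - (starRingEnd ℂ) (f 0) * f z‖ ^ 2
      / ((1 + ‖gm f 0‖ * ‖z‖) ^ 2
        * ((1 - ‖f 0‖ ^ 2) * (1 + ‖f z‖)))
    ≤ (1 - ‖f z‖) / (1 - ‖z‖) := by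
  have hzb := mem_ball_zero_iff.1 hz
  set r := ‖z‖ with hr
  set s := ‖f z‖ with hs
  set c := ‖gm f 0‖ with hc
  set m := ‖gm f z‖ with hmm
  set t := ‖1 - (starRingEnd ℂ) (f 0) * f z‖ with ht
  have ha : ‖f 0‖ < 1 := by
    simpa [mem_ball_zero_iff] using hm (mem_ball_self one_pos)
  have hfz : s < 1 := by simpa [mem_ball_zero_iff, hs] using hm hz
  have hr0 : 0 ≤ r := norm_nonneg z
  have hs0 : 0 ≤ s := norm_nonneg (f z)
  have hc0 : 0 ≤ c := norm_nonneg _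
  have hm0 : 0 ≤ m := norm_nonneg _
  have ht0 : 0 ≤ t := norm_nonneg _
  have ha0 : 0 ≤ ‖f 0‖ := norm_nonneg _
  have hc1 : c ≤ 1 := gm_bdd hd hm 0 (mem_ball_self one_pos)
  have ha2 : 0 < 1 - ‖f 0‖ ^ 2 := by nlinarith
  have hcr : 0 < 1 + c * r := by nlinarith
  have htne : t ≠ 0 := by
    rw [ht]
    exact norm_ne_zero_iff.mpr (jwc_ne (f 0) (f z) ha hfz.le)
  have habs_t : ‖f z - f 0‖ = r * m * t := by
    have hden := jwc_ne (f 0) (f z) ha hfz.le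
    have h2 := Fm_eq_mul (f := f) z
    have h1 : Fm f z = (f z - f 0) / (1 - (starRingEnd ℂ) (f 0) * f z) := rfl
    rw [h1, div_eq_iff hden] at h2
    rw [h2, norm_mul, norm_mul]
  have kE : (1 - s ^ 2) * (1 - ‖f 0‖ ^ 2) = (1 - (r * m) ^ 2) * t ^ 2 := by
    have := jwc_id (f 0) (f z)
    rw [← ht, ← hs, habs_t] at this
    nlinarith [this]
  have kSP : m * (1 + c * r) ≤ c + r := by
    have := bound_sp0 (gm_diff hd hm) (gm_bdd hd hm) hzb
    rw [← hmm, ← hc, ← hr] at this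
    linarith [this]
  have hpoly : (1 - r ^ 2) * ((1 + c * r) ^ 2 + r ^ 2 * (1 - c ^ 2))
      ≤ (1 - (r * m) ^ 2) * (1 + c * r) ^ 2 := by
    have h2 : (m * (1 + c * r)) ^ 2 ≤ (c + r) ^ 2 :=
      pow_le_pow_left₀ (by positivity) kSP 2
    nlinarith [sq_nonneg r, mul_nonneg (sq_nonneg r) (sub_nonneg.2 h2)]
  rw [div_le_div_iff₀ (by positivity) (by linarith)]
  have step : (1 - r ^ 2) * ((1 + c * r) ^ 2 + r ^ 2 * (1 - c ^ 2)) * t ^ 2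
      ≤ (1 - s ^ 2) * (1 - ‖f 0‖ ^ 2) * (1 + c * r) ^ 2 := by
    rw [kE]
    linarith [mul_le_mul_of_nonneg_right hpoly (sq_nonneg t)]
  linarith [step]

end JWCAux

set_option maxHeartbeats 1600000 in
/-- Lower bound for the boundary dilation coefficient in terms of the hyperbolic
derivative at the origin. -/
theorem stmt7 (f : ℂ → ℂ) (σ fσ : ℂ) (β : ℝ) (hf : HolSelfDisk f)
    (hσ : ‖σ‖ = 1) (hβ : betaE f σ = (β : EReal))
    (hfσ : ‖fσ‖ = 1) (hlim : NTLim f σ fσ) :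
    β ≥ 2 / (1 + ‖deriv f 0 / ((1 - ‖f 0‖ ^ 2 : ℝ) : ℂ)‖) *
        (‖fσ - f 0‖ ^ 2 / (1 - ‖f 0‖ ^ 2)) ∧
    2 / (1 + ‖deriv f 0 / ((1 - ‖f 0‖ ^ 2 : ℝ) : ℂ)‖) *
        (‖fσ - f 0‖ ^ 2 / (1 - ‖f 0‖ ^ 2)) ≥
      2 / (1 + ‖deriv f 0 / ((1 - ‖f 0‖ ^ 2 : ℝ) : ℂ)‖) *
        ((1 - ‖f 0‖) / (1 + ‖f 0‖)) := by
  obtain ⟨hd, hm⟩ := hf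
  have hgz := gm_zero hd hm
  have h0 : (0:ℂ) ∈ Metric.ball (0:ℂ) 1 := mem_ball_self one_pos
  have ha : ‖f 0‖ < 1 := mem_ball_zero_iff.1 (hm h0)
  have ha0 : 0 ≤ ‖f 0‖ := norm_nonneg _
  have ha2 : 0 < 1 - ‖f 0‖ ^ 2 := by nlinarith
  constructor
  · -- main inequality
    rw [← hgz]
    set c := ‖gm f 0‖ with hc
    have hc0 : 0 ≤ c := norm_nonneg _
    have hc1 : c ≤ 1 := gm_bdd hd hm 0 h0
    set l := nhdsWithin σ (Metric.ball (0:ℂ) 1) with hl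
    haveI hlne : l.NeBot := by
      refine mem_closure_iff_nhdsWithin_neBot.1 ?_
      rw [closure_ball (0:ℂ) one_ne_zero]
      simpa [mem_closedBall_zero_iff] using le_of_eq hσ
    set q : ℂ → ℝ := fun z => (1 - ‖f z‖) / (1 - ‖z‖) with hq
    -- extract a minimizing sequence
    obtain ⟨B, hB⟩ := l.exists_antitone_basis
    have hfreq : ∀ n : ℕ, ∃ z, z ∈ B n ∧ z ∈ Metric.ball (0:ℂ) 1 ∧ q z < β + 1/(n+1) := by
      intro n
      have hpos : (0:ℝ) < 1/(n+1) := by positivity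
      have h1 : betaE f σ < ((β + 1/(n+1) : ℝ) : EReal) := by
        rw [hβ]; exact_mod_cast lt_add_of_pos_right β hpos
      have h2 := Filter.frequently_lt_of_liminf_lt (u := fun z => ((q z : ℝ) : EReal))
        (f := l) (by isBoundedDefault) h1
      have h4 : B n ∩ Metric.ball (0:ℂ) 1 ∈ l :=
        Filter.inter_mem (hB.1.mem_of_mem trivial) self_mem_nhdsWithin
      obtain ⟨z, hz1, hz2⟩ := (h2.and_eventually (Filter.eventually_iff_exists_mem.2
        ⟨_, h4, fun y hy => hy⟩)).exists
      refine ⟨z, hz2.1, hz2.2, ?_⟩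
      have hz1' : ((q z : ℝ) : EReal) < ((β + 1/(n+1) : ℝ) : EReal) := hz1
      exact_mod_cast hz1'
    choose zs hzB hzball hzq using hfreq
    have htend : Filter.Tendsto zs Filter.atTop l := hB.tendsto hzB
    have hqlim : Filter.Tendsto (fun n => q (zs n)) Filter.atTop (nhds β) := by
      rw [tendsto_order]
      constructor
      · intro b hb
        have h1 : ((b:ℝ) : EReal) < betaE f σ := by rw [hβ]; exact_mod_cast hb
        have h2 := Filter.eventually_lt_of_lt_liminf (u := fun z => ((q z : ℝ) : EReal))
          (f := l) h1 (by isBoundedDefault)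
        refine (htend.eventually h2).mono fun n h => ?_
        have h' : ((b:ℝ):EReal) < ((q (zs n) : ℝ) : EReal) := h
        exact_mod_cast h'
      · intro b hb
        obtain ⟨N, hN⟩ := exists_nat_one_div_lt (show (0:ℝ) < b - β by linarith)
        filter_upwards [Filter.eventually_ge_atTop N] with n hn
        have h3 : (1:ℝ)/(n+1) ≤ 1/(N+1) := by
          apply one_div_le_one_div_of_le (by positivity)
          exact_mod_cast Nat.succ_le_succ hn
        calc q (zs n) < β + 1/(n+1) := hzq n
          _ ≤ β + 1/(N+1) := by linarith
          _ < b := by linarith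
    have habs1 : Filter.Tendsto (fun n => ‖zs n‖) Filter.atTop (nhds 1) := by
      have h5 : Filter.Tendsto zs Filter.atTop (nhds σ) := htend.mono_right nhdsWithin_le_nhds
      have := (continuous_norm.tendsto σ).comp h5
      rwa [hσ] at this
    have hqpos : ∀ n, 0 < q (zs n) := by
      intro n
      have h1 : ‖zs n‖ < 1 := mem_ball_zero_iff.1 (hzball n)
      have h2 : ‖f (zs n)‖ < 1 := mem_ball_zero_iff.1 (hm (hzball n))
      exact div_pos (by linarith) (by linarith)
    have hβ0 : 0 ≤ β := ge_of_tendsto' hqlim (fun n => (hqpos n).le)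
    have habsf1 : Filter.Tendsto (fun n => ‖f (zs n)‖) Filter.atTop (nhds 1) := by
      have he : ∀ n, ‖f (zs n)‖ = 1 - q (zs n) * (1 - ‖zs n‖) := by
        intro n
        have h1 : (1:ℝ) - ‖zs n‖ ≠ 0 := by
          have h2 : ‖zs n‖ < 1 := mem_ball_zero_iff.1 (hzball n)
          intro hcon; linarith
        rw [hq]
        field_simp
        ring
      have h2 : Filter.Tendsto (fun n => 1 - q (zs n) * (1 - ‖zs n‖))
          Filter.atTop (nhds (1 - β * (1 - 1))) :=
        tendsto_const_nhds.sub (hqlim.mul (tendsto_const_nhds.sub habs1))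
      simp only [sub_self, mul_zero, sub_zero] at h2
      exact h2.congr (fun n => (he n).symm)
    have hmemcb : ∀ n, f (zs n) ∈ Metric.closedBall (0:ℂ) 1 :=
      fun n => Metric.ball_subset_closedBall (hm (hzball n))
    obtain ⟨η, hηmem, φ, hφmono, hφtend⟩ :=
      (isCompact_closedBall (0:ℂ) 1).tendsto_subseq hmemcb
    set w : ℕ → ℂ := fun n => zs (φ n) with hw
    have htw : Filter.Tendsto w Filter.atTop l := htend.comp hφmono.tendsto_atTop
    have htwσ : Filter.Tendsto w Filter.atTop (nhds σ) := htw.mono_right nhdsWithin_le_nhds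
    have hqw : Filter.Tendsto (fun n => q (w n)) Filter.atTop (nhds β) :=
      hqlim.comp hφmono.tendsto_atTop
    have habsw : Filter.Tendsto (fun n => ‖w n‖) Filter.atTop (nhds 1) :=
      habs1.comp hφmono.tendsto_atTop
    have habsfw : Filter.Tendsto (fun n => ‖f (w n)‖) Filter.atTop (nhds 1) :=
      habsf1.comp hφmono.tendsto_atTop
    have hfw : Filter.Tendsto (fun n => f (w n)) Filter.atTop (nhds η) := hφtend
    have hwball : ∀ n, w n ∈ Metric.ball (0:ℂ) 1 := fun n => hzball (φ n)
    haveI hne01 : (nhdsWithin (1:ℝ) (Set.Ioo (0:ℝ) 1)).NeBot := by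
      refine mem_closure_iff_nhdsWithin_neBot.1 ?_
      rw [closure_Ioo one_ne_zero.symm]
      exact ⟨zero_le_one, le_rfl⟩
    have hrad : Filter.Tendsto (fun r : ℝ => f ((r:ℂ) * σ))
        (nhdsWithin (1:ℝ) (Set.Ioo (0:ℝ) 1)) (nhds fσ) := by
      apply (hlim 2 one_lt_two).comp
      rw [tendsto_nhdsWithin_iff]
      constructor
      · have hcts : Continuous (fun r : ℝ => (r:ℂ) * σ) :=
          (Complex.continuous_ofReal.mul continuous_const)
        have := (hcts.tendsto 1).mono_left
          (nhdsWithin_le_nhds (s := Set.Ioo (0:ℝ) 1))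
        simpa using this
      · refine eventually_mem_nhdsWithin.mono fun r hr => ?_
        have hr1 : ‖(r:ℂ) * σ‖ = r := by
          rw [norm_mul, Complex.norm_real, Real.norm_eq_abs, hσ, mul_one, abs_of_pos hr.1]
        constructor
        · rw [hr1]; exact hr.2
        · have hr2 : σ - (r:ℂ) * σ = ((1 - r : ℝ) : ℂ) * σ := by push_cast; ring
          rw [hr1, hr2, norm_mul, Complex.norm_real, Real.norm_eq_abs, hσ, mul_one,
            abs_of_pos (by linarith [hr.2] : (0:ℝ) < 1 - r),
            div_self (by linarith [hr.2] : (1:ℝ) - r ≠ 0)]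
          norm_num
    have key_r : ∀ r : ℝ, r ∈ Set.Ioo (0:ℝ) 1 →
        ‖1 - (starRingEnd ℂ) η * f ((r:ℂ) * σ)‖ ^ 2 ≤ β * ((1 - r)/(1 + r)) := by
      intro r hr
      set zr : ℂ := (r:ℂ) * σ with hzr
      have hzrabs : ‖zr‖ = r := by
        rw [hzr, norm_mul, Complex.norm_real, Real.norm_eq_abs, hσ, mul_one, abs_of_pos hr.1]
      have hzrb : zr ∈ Metric.ball (0:ℂ) 1 := by
        rw [mem_ball_zero_iff, hzrabs]; exact hr.2
      have hfzr : ‖f zr‖ < 1 := mem_ball_zero_iff.1 (hm hzrb)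
      have hσσ : (starRingEnd ℂ) σ * σ = 1 := by
        have h1 : Complex.normSq σ = 1 := by rw [Complex.normSq_eq_norm_sq, hσ]; norm_num
        rw [mul_comm, Complex.mul_conj, h1, Complex.ofReal_one]
      have hDσ : (1:ℂ) - (starRingEnd ℂ) σ * zr = ((1 - r : ℝ) : ℂ) := by
        rw [hzr, ← mul_assoc, mul_comm ((starRingEnd ℂ) σ) ((r:ℂ)), mul_assoc, hσσ]
        push_cast; ring
      have hLRn : ∀ n,
          (1 - r^2) * ‖1 - (starRingEnd ℂ) (f (w n)) * f zr‖ ^ 2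
          ≤ (1 - ‖f zr‖^2)
              * (q (w n) * ((1 + ‖f (w n)‖)/(1 + ‖w n‖)))
              * ‖1 - (starRingEnd ℂ) (w n) * zr‖ ^ 2 := by
        intro n
        have hwa : ‖w n‖ < 1 := mem_ball_zero_iff.1 (hwball n)
        have hfwa : ‖f (w n)‖ < 1 := mem_ball_zero_iff.1 (hm (hwball n))
        have hwpos : (0:ℝ) < 1 - ‖w n‖ ^ 2 := by
          nlinarith [norm_nonneg (w n)]
        have hQ : q (w n) * ((1 + ‖f (w n)‖)/(1 + ‖w n‖))
            = (1 - ‖f (w n)‖^2)/(1 - ‖w n‖^2) := by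
          rw [hq]
          have h1 : (0:ℝ) < 1 - ‖w n‖ := by linarith
          have h2 : (0:ℝ) < 1 + ‖w n‖ := by
            linarith [norm_nonneg (w n)]
          field_simp
          ring
        have hJ := julia_pt hd hm hwa (by rw [hzrabs]; exact hr.2 : ‖zr‖ < 1)
        rw [hzrabs] at hJ
        rw [hQ, show (1 - ‖f zr‖^2)
              * ((1 - ‖f (w n)‖^2)/(1 - ‖w n‖^2))
              * ‖1 - (starRingEnd ℂ) (w n) * zr‖ ^ 2
            = ((1 - ‖f zr‖^2) * (1 - ‖f (w n)‖^2)
              * ‖1 - (starRingEnd ℂ) (w n) * zr‖ ^ 2)/(1 - ‖w n‖^2)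
            from by ring, le_div_iff₀ hwpos]
        nlinarith [hJ]
      have hCl : Filter.Tendsto (fun n => ‖1 - (starRingEnd ℂ) (f (w n)) * f zr‖)
          Filter.atTop (nhds (‖1 - (starRingEnd ℂ) η * f zr‖)) := by
        have h1 : Filter.Tendsto (fun n => 1 - (starRingEnd ℂ) (f (w n)) * f zr)
            Filter.atTop (nhds (1 - (starRingEnd ℂ) η * f zr)) :=
          tendsto_const_nhds.sub (((Complex.continuous_conj.tendsto η).comp hfw).mul_const _)
        exact (continuous_norm.tendsto _).comp h1
      have hDl : Filter.Tendsto (fun n => ‖1 - (starRingEnd ℂ) (w n) * zr‖)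
          Filter.atTop (nhds (1 - r)) := by
        have h1 : Filter.Tendsto (fun n => 1 - (starRingEnd ℂ) (w n) * zr)
            Filter.atTop (nhds (1 - (starRingEnd ℂ) σ * zr)) :=
          tendsto_const_nhds.sub (((Complex.continuous_conj.tendsto σ).comp htwσ).mul_const _)
        have h2 := (continuous_norm.tendsto _).comp h1
        rw [hDσ, Complex.norm_real, Real.norm_eq_abs,
          abs_of_pos (show (0:ℝ) < 1 - r by linarith [hr.2])] at h2
        exact h2
      have hLt : Filter.Tendsto
          (fun n => (1 - r^2) * ‖1 - (starRingEnd ℂ) (f (w n)) * f zr‖ ^ 2)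
          Filter.atTop (nhds ((1 - r^2) * ‖1 - (starRingEnd ℂ) η * f zr‖ ^ 2)) :=
        tendsto_const_nhds.mul (hCl.pow 2)
      have hfrac : Filter.Tendsto
          (fun n => (1 + ‖f (w n)‖)/(1 + ‖w n‖))
          Filter.atTop (nhds 1) := by
        have := ((tendsto_const_nhds (x := (1:ℝ))).add habsfw).div
          ((tendsto_const_nhds (x := (1:ℝ))).add habsw) (by norm_num : (1:ℝ) + 1 ≠ 0)
        simpa [Pi.div_def] using this
      have hRt : Filter.Tendsto
          (fun n => (1 - ‖f zr‖^2)
              * (q (w n) * ((1 + ‖f (w n)‖)/(1 + ‖w n‖)))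
              * ‖1 - (starRingEnd ℂ) (w n) * zr‖ ^ 2)
          Filter.atTop (nhds ((1 - ‖f zr‖^2) * β * (1 - r)^2)) := by
        have := ((tendsto_const_nhds (x := 1 - ‖f zr‖^2)).mul
          (hqw.mul hfrac)).mul (hDl.pow 2)
        simpa [mul_one] using this
      have hE := le_of_tendsto_of_tendsto' hLt hRt hLRn
      have h8 : ‖1 - (starRingEnd ℂ) η * f zr‖ ^ 2 * (1 - r^2) ≤ β * (1 - r)^2 := by
        nlinarith [hE, mul_nonneg (mul_nonneg (sq_nonneg (‖f zr‖)) hβ0)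
          (sq_nonneg (1 - r)), sq_nonneg (‖f zr‖)]
      have hr2pos : (0:ℝ) < 1 - r^2 := by nlinarith [hr.1, hr.2]
      have h9 : β * ((1 - r)/(1 + r)) * (1 - r^2) = β * (1 - r)^2 := by
        have h1r : (1:ℝ) + r ≠ 0 := by nlinarith [hr.1]
        field_simp
        ring
      have h10 : ‖1 - (starRingEnd ℂ) η * f zr‖ ^ 2 * (1 - r^2)
          ≤ β * ((1 - r)/(1 + r)) * (1 - r^2) := by rw [h9]; exact h8
      exact le_of_mul_le_mul_right h10 hr2pos
    have hfσeta : η = fσ := by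
      have hcont : Continuous (fun v : ℂ => ‖1 - (starRingEnd ℂ) η * v‖ ^ 2) :=
        (continuous_norm.comp (continuous_const.sub (continuous_const.mul continuous_id))).pow 2
      have hL1 : Filter.Tendsto
          (fun r : ℝ => ‖1 - (starRingEnd ℂ) η * f ((r:ℂ) * σ)‖ ^ 2)
          (nhdsWithin (1:ℝ) (Set.Ioo (0:ℝ) 1))
          (nhds (‖1 - (starRingEnd ℂ) η * fσ‖ ^ 2)) :=
        (hcont.tendsto fσ).comp hrad
      have hR1 : Filter.Tendsto (fun r : ℝ => β * ((1 - r)/(1 + r)))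
          (nhdsWithin (1:ℝ) (Set.Ioo (0:ℝ) 1)) (nhds 0) := by
        have h1 : ContinuousAt (fun r : ℝ => β * ((1 - r)/(1 + r))) 1 := by
          apply ContinuousAt.mul continuousAt_const
          exact ContinuousAt.div (by fun_prop) (by fun_prop) (by norm_num)
        have h2 := h1.tendsto.mono_left (nhdsWithin_le_nhds (s := Set.Ioo (0:ℝ) 1))
        simpa using h2
      have h11 := le_of_tendsto_of_tendsto hL1 hR1
        (eventually_mem_nhdsWithin.mono fun r hr => key_r r hr)
      have h12 : ‖1 - (starRingEnd ℂ) η * fσ‖ ^ 2 = 0 :=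
        le_antisymm h11 (sq_nonneg _)
      have h13 : (1:ℂ) - (starRingEnd ℂ) η * fσ = 0 := by
        have h13a : ‖1 - (starRingEnd ℂ) η * fσ‖ = 0 :=
          (pow_eq_zero_iff two_ne_zero).1 h12
        exact norm_eq_zero.1 h13a
      have hηfσ : (starRingEnd ℂ) η * fσ = 1 := (sub_eq_zero.1 h13).symm
      have hη1 : ‖η‖ = 1 := by
        have h14 := congrArg norm hηfσ
        rw [norm_mul, Complex.norm_conj, hfσ, mul_one, norm_one] at h14
        exact h14
      calc η = η * ((starRingEnd ℂ) η * fσ) := by rw [hηfσ, mul_one]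
      _ = (η * (starRingEnd ℂ) η) * fσ := by ring
      _ = fσ := by
          rw [Complex.mul_conj]
          have h15 : Complex.normSq η = 1 := by rw [Complex.normSq_eq_norm_sq, hη1]; norm_num
          rw [h15, Complex.ofReal_one, one_mul]
    rw [hfσeta] at hfw
    have hTl : Filter.Tendsto (fun n => ‖1 - (starRingEnd ℂ) (f 0) * f (w n)‖)
        Filter.atTop (nhds (‖1 - (starRingEnd ℂ) (f 0) * fσ‖)) := by
      have h1 : Filter.Tendsto (fun n => 1 - (starRingEnd ℂ) (f 0) * f (w n))
          Filter.atTop (nhds (1 - (starRingEnd ℂ) (f 0) * fσ)) :=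
        tendsto_const_nhds.sub (tendsto_const_nhds.mul hfw)
      exact (continuous_norm.tendsto _).comp h1
    have hnum : Filter.Tendsto (fun n =>
        (1 + ‖w n‖) * ((1 + c * ‖w n‖) ^ 2
          + ‖w n‖ ^ 2 * (1 - c ^ 2))
        * ‖1 - (starRingEnd ℂ) (f 0) * f (w n)‖ ^ 2)
        Filter.atTop (nhds ((1 + 1) * ((1 + c * 1) ^ 2 + 1 ^ 2 * (1 - c ^ 2))
          * ‖1 - (starRingEnd ℂ) (f 0) * fσ‖ ^ 2)) :=
      ((tendsto_const_nhds.add habsw).mul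
        (((tendsto_const_nhds.add (tendsto_const_nhds.mul habsw)).pow 2).add
          ((habsw.pow 2).mul tendsto_const_nhds))).mul (hTl.pow 2)
    have hden : Filter.Tendsto (fun n =>
        (1 + c * ‖w n‖) ^ 2
          * ((1 - ‖f 0‖ ^ 2) * (1 + ‖f (w n)‖)))
        Filter.atTop (nhds ((1 + c * 1) ^ 2 * ((1 - ‖f 0‖ ^ 2) * (1 + 1)))) :=
      ((tendsto_const_nhds.add (tendsto_const_nhds.mul habsw)).pow 2).mul
        (tendsto_const_nhds.mul (tendsto_const_nhds.add habsfw))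
    have hdenne : (1 + c * 1) ^ 2 * ((1 - ‖f 0‖ ^ 2) * (1 + 1)) ≠ 0 := by
      positivity
    have hV := hnum.div hden hdenne
    have hfinal := le_of_tendsto_of_tendsto' hV hqw (fun n => chain_ineq hd hm (hwball n))
    have hσf1 : (starRingEnd ℂ) fσ * fσ = 1 := by
      have h1 : Complex.normSq fσ = 1 := by rw [Complex.normSq_eq_norm_sq, hfσ]; norm_num
      rw [mul_comm, Complex.mul_conj, h1, Complex.ofReal_one]
    have habsT : ‖1 - (starRingEnd ℂ) (f 0) * fσ‖ = ‖fσ - f 0‖ := by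
      have h1 : (1:ℂ) - (starRingEnd ℂ) (f 0) * fσ = (starRingEnd ℂ) (fσ - f 0) * fσ := by
        rw [map_sub]
        linear_combination (-1 : ℂ) * hσf1
      rw [h1, norm_mul, Complex.norm_conj, hfσ, mul_one]
    have hc1ne : (1:ℝ) + c ≠ 0 := by positivity
    have hVK : (1 + 1) * ((1 + c * 1) ^ 2 + 1 ^ 2 * (1 - c ^ 2))
          * ‖1 - (starRingEnd ℂ) (f 0) * fσ‖ ^ 2
        / ((1 + c * 1) ^ 2 * ((1 - ‖f 0‖ ^ 2) * (1 + 1)))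
        = 2 / (1 + c) * (‖fσ - f 0‖ ^ 2 / (1 - ‖f 0‖ ^ 2)) := by
      rw [habsT]
      field_simp
      ring
    rw [hVK] at hfinal
    exact hfinal
  · -- the elementary second inequality
    have hC0 : 0 ≤ 2 / (1 + ‖deriv f 0 / ((1 - ‖f 0‖ ^ 2 : ℝ) : ℂ)‖) := by
      positivity
    apply mul_le_mul_of_nonneg_left _ hC0
    rw [div_le_div_iff₀ (by linarith) ha2]
    have h7 : 1 - ‖f 0‖ ≤ ‖fσ - f 0‖ := by
      have h8 := norm_sub_norm_le fσ (f 0)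
      rw [hfσ] at h8
      exact h8
    nlinarith [pow_le_pow_left₀ (by linarith : (0:ℝ) ≤ 1 - ‖f 0‖) h7 2]
end
end

section
/- Let f ∈ Hol(𝔻,𝔻), not an automorphism, with f(0)=0, β_f(σ) < +∞ and f(σ) = σ for some σ ∈ ∂𝔻. Then β_f(σ) ≥ 1 + |1 − f'(0)|²/(1 − |f'(0)|²). -/
open Complex Filter Set Metric Finset

noncomputable section

section CPAux

def mob (a z : ℂ) : ℂ := (a - z) / (1 - (starRingEnd ℂ) a * z)

lemma normSq_id (a z : ℂ) :
    ‖1 - (starRingEnd ℂ) a * z‖ ^ 2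
      = ‖a - z‖ ^ 2 + (1 - ‖a‖ ^ 2) * (1 - ‖z‖ ^ 2) := by
  rw [← Complex.normSq_eq_norm_sq, ← Complex.normSq_eq_norm_sq, ← Complex.normSq_eq_norm_sq,
    ← Complex.normSq_eq_norm_sq]
  simp only [Complex.normSq_sub, Complex.normSq_mul, Complex.normSq_conj, Complex.normSq_one,
    Complex.mul_conj]
  simp [Complex.normSq_apply]
  ring

lemma mob_denom_ne {a z : ℂ} (ha : ‖a‖ < 1) (hz : ‖z‖ < 1) :
    1 - (starRingEnd ℂ) a * z ≠ 0 := by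
  intro h
  have h1 : (starRingEnd ℂ) a * z = 1 := by linear_combination -h
  have : ‖(starRingEnd ℂ) a * z‖ = 1 := by rw [h1]; simp
  rw [norm_mul, Complex.norm_conj] at this
  nlinarith [norm_nonneg a, norm_nonneg z]

lemma mob_mem {a z : ℂ} (ha : ‖a‖ < 1) (hz : ‖z‖ < 1) :
    ‖mob a z‖ < 1 := by
  have hpos : 0 < ‖1 - (starRingEnd ℂ) a * z‖ :=
    norm_pos_iff.mpr (mob_denom_ne ha hz)
  rw [mob, norm_div, div_lt_one hpos]
  have hid := normSq_id a z
  have hA : 0 < 1 - ‖a‖ ^ 2 := by nlinarith [norm_nonneg a]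
  have hZ : 0 < 1 - ‖z‖ ^ 2 := by nlinarith [norm_nonneg z]
  by_contra hcon
  push_neg at hcon
  have h2 : ‖1 - (starRingEnd ℂ) a * z‖ ^ 2 ≤ ‖a - z‖ ^ 2 :=
    pow_le_pow_left₀ (norm_nonneg _) hcon 2
  nlinarith [mul_pos hA hZ]

lemma mob_invol {a z : ℂ} (ha : ‖a‖ < 1) (hz : ‖z‖ < 1) :
    mob a (mob a z) = z := by
  have h1 := mob_denom_ne ha hz
  have h2 := mob_denom_ne ha (mob_mem ha hz)
  have h3 : (1 : ℂ) - a * (starRingEnd ℂ) a ≠ 0 := by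
    intro h
    have h1 : a * (starRingEnd ℂ) a = 1 := by linear_combination -h
    have : ‖a * (starRingEnd ℂ) a‖ = 1 := by rw [h1]; simp
    rw [norm_mul, Complex.norm_conj] at this
    nlinarith [norm_nonneg a]
  have h2' : 1 - (starRingEnd ℂ) a * ((a - z) / (1 - (starRingEnd ℂ) a * z)) ≠ 0 := h2
  rw [mob, mob, div_eq_iff h2', div_eq_mul_inv (a - z)]
  linear_combination (z - a) * (mul_inv_cancel₀ h1)

lemma mob_diff {a : ℂ} (ha : ‖a‖ < 1) :
    DifferentiableOn ℂ (mob a) (Metric.ball (0:ℂ) 1) := by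
  apply DifferentiableOn.div
  · exact (differentiableOn_const a).sub differentiableOn_id
  · exact (differentiableOn_const 1).sub (differentiableOn_id.const_mul _)
  · intro z hz
    exact mob_denom_ne ha (by simpa [mem_ball, dist_eq] using hz)

lemma mob_mapsTo {a : ℂ} (ha : ‖a‖ < 1) :
    Set.MapsTo (mob a) (Metric.ball (0:ℂ) 1) (Metric.ball (0:ℂ) 1) := by
  intro z hz
  rw [mem_ball_zero_iff] at hz ⊢
  exact mob_mem ha (by simpa using hz)

lemma sp_abs {f : ℂ → ℂ} (hf : HolSelfDisk f) {z w : ℂ}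
    (hz : ‖z‖ < 1) (hw : ‖w‖ < 1) :
    ‖mob (f w) (f z)‖ ≤ ‖mob w z‖ := by
  have hwb : w ∈ Metric.ball (0:ℂ) 1 := mem_ball_zero_iff.2 (by simpa using hw)
  have hfw : ‖f w‖ < 1 := by
    simpa [mem_ball_zero_iff] using hf.2 hwb
  set F : ℂ → ℂ := fun u => mob (f w) (f (mob w u)) with hF
  have hFd : DifferentiableOn ℂ F (Metric.ball (0:ℂ) 1) := by
    apply ((mob_diff hfw).comp ((hf.1.comp (mob_diff hw) (mob_mapsTo hw)))
      ((hf.2.comp (mob_mapsTo hw))))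
  have hFm : Set.MapsTo F (Metric.ball (0:ℂ) 1) (Metric.ball (0:ℂ) 1) :=
    (mob_mapsTo hfw).comp ((hf.2).comp (mob_mapsTo hw))
  have hF0 : F 0 = 0 := by
    have : mob w 0 = w := by simp [mob]
    simp [hF, this, mob]
  have key := Complex.norm_le_norm_of_mapsTo_ball hFd (hFm.mono_right Metric.ball_subset_closedBall) hF0
    (z := mob w z) (by simpa using mob_mem hw hz)
  simpa only [hF, mob_invol hw hz] using key

lemma sp2 {f : ℂ → ℂ} (hf : HolSelfDisk f) {z w : ℂ}
    (hz : ‖z‖ < 1) (hw : ‖w‖ < 1) :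
    (1 - ‖z‖ ^ 2) * (1 - ‖w‖ ^ 2) *
      ‖1 - (starRingEnd ℂ) (f w) * f z‖ ^ 2 ≤
    (1 - ‖f z‖ ^ 2) * (1 - ‖f w‖ ^ 2) *
      ‖1 - (starRingEnd ℂ) w * z‖ ^ 2 := by
  have hzb : z ∈ Metric.ball (0:ℂ) 1 := mem_ball_zero_iff.2 (by simpa using hz)
  have hwb : w ∈ Metric.ball (0:ℂ) 1 := mem_ball_zero_iff.2 (by simpa using hw)
  have hfz : ‖f z‖ < 1 := by simpa [mem_ball_zero_iff] using hf.2 hzb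
  have hfw : ‖f w‖ < 1 := by simpa [mem_ball_zero_iff] using hf.2 hwb
  have h := sp_abs hf hz hw
  rw [mob, mob, norm_div, norm_div] at h
  have hB := norm_pos_iff.mpr (mob_denom_ne hfw hfz)
  have hD := norm_pos_iff.mpr (mob_denom_ne hw hz)
  rw [div_le_div_iff₀ hB hD] at h
  have h2 : ‖f w - f z‖ ^ 2 * ‖1 - (starRingEnd ℂ) w * z‖ ^ 2 ≤
      ‖w - z‖ ^ 2 * ‖1 - (starRingEnd ℂ) (f w) * f z‖ ^ 2 := by
    have := mul_le_mul h h (by positivity) (by positivity)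
    nlinarith [this]
  have idB := normSq_id (f w) (f z)
  have idD := normSq_id w z
  nlinarith [h2, sq_nonneg (‖w - z‖), sq_nonneg (‖f w - f z‖)]

lemma harnack {G : ℂ → ℂ} (hd : DifferentiableOn ℂ G (Metric.ball (0:ℂ) 1))
    (hre : ∀ z ∈ Metric.ball (0:ℂ) 1, 0 ≤ (G z).re) :
    ‖deriv G 0‖ ≤ 2 * (G 0).re := by
  have h0 : (0:ℂ) ∈ Metric.ball (0:ℂ) 1 := by simp
  have hre0 : 0 ≤ (G 0).re := hre 0 h0
  have key : ∀ ε : ℝ, 0 < ε → ‖deriv G 0‖ ≤ 2 * (G 0).re + 2 * ε := by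
    intro ε hε
    set k : ℂ := (starRingEnd ℂ) (G 0) + (2 * ε : ℝ) with hk
    have hden : ∀ z ∈ Metric.ball (0:ℂ) 1, 0 < (G z + k).re := by
      intro z hz
      have := hre z hz
      simp only [hk, Complex.add_re, Complex.conj_re, Complex.ofReal_re]
      linarith
    have hdenne : ∀ z ∈ Metric.ball (0:ℂ) 1, G z + k ≠ 0 := by
      intro z hz h
      have := hden z hz
      rw [h] at this; simp at this
    set P : ℂ → ℂ := fun z => (G z - G 0) / (G z + k) with hP
    have hPd : DifferentiableOn ℂ P (Metric.ball (0:ℂ) 1) :=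
      ((hd.sub (differentiableOn_const _)).div (hd.add (differentiableOn_const _)) hdenne)
    have hP0 : P 0 = 0 := by simp [hP]
    have hPm : Set.MapsTo P (Metric.ball (0:ℂ) 1) (Metric.ball (P 0) 1) := by
      intro z hz
      rw [hP0, mem_ball_zero_iff]
      have hsq : ‖G z - G 0‖ ^ 2 < ‖G z + k‖ ^ 2 := by
        rw [Complex.sq_norm, Complex.sq_norm, Complex.normSq_apply, Complex.normSq_apply]
        simp only [hk, Complex.add_re, Complex.add_im, Complex.sub_re, Complex.sub_im,
          Complex.conj_re, Complex.conj_im, Complex.ofReal_re, Complex.ofReal_im]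
        have h1 := hre z hz
        nlinarith [hre0]
      have hb : (0:ℝ) ≤ ‖G z + k‖ := norm_nonneg _
      have := lt_of_pow_lt_pow_left₀ 2 hb hsq
      simp only [hP]
      calc ‖(G z - G 0)/(G z + k)‖ = ‖G z - G 0‖ / ‖G z + k‖ := by
            rw [norm_div]
        _ < 1 := by
            rw [div_lt_one (lt_of_le_of_lt (norm_nonneg _) this)]
            exact this
    have hSch := Complex.norm_deriv_le_div_of_mapsTo_ball hPd (hPm.mono_right Metric.ball_subset_closedBall) one_pos
    rw [div_self (one_ne_zero)] at hSch
    -- compute deriv P 0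
    have hGd : HasDerivAt G (deriv G 0) 0 :=
      (hd.differentiableAt (isOpen_ball.mem_nhds h0)).hasDerivAt
    have hne0 : G 0 + k ≠ 0 := hdenne 0 h0
    have hPd0 : HasDerivAt P ((deriv G 0 * (G 0 + k) - (G 0 - G 0) * deriv G 0) / (G 0 + k) ^ 2) 0 :=
      (hGd.sub_const (G 0)).div (hGd.add_const k) hne0
    have hval : (deriv G 0 * (G 0 + k) - (G 0 - G 0) * deriv G 0) / (G 0 + k) ^ 2
        = deriv G 0 / (G 0 + k) := by
      field_simp
      ring
    rw [hval] at hPd0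
    have hderivP : deriv P 0 = deriv G 0 / (G 0 + k) := hPd0.deriv
    rw [hderivP, norm_div, div_le_one (norm_pos_iff.mpr hne0)] at hSch
    have hGk : G 0 + k = ((2 * (G 0).re + 2 * ε : ℝ) : ℂ) := by
      rw [hk]
      rw [← add_assoc, Complex.add_conj]
      push_cast
      ring
    rw [hGk, Complex.norm_real, Real.norm_eq_abs, abs_of_pos (by linarith)] at hSch
    linarith
  by_contra hcon
  push_neg at hcon
  have hε : 0 < (‖deriv G 0‖ - 2 * (G 0).re) / 4 := by linarith
  have := key _ hε
  linarith

lemma sigma_ne {σ w : ℂ} (hσ : ‖σ‖ = 1) (hw : ‖w‖ < 1) : σ - w ≠ 0 := by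
  intro h
  rw [sub_eq_zero] at h
  rw [← h, hσ] at hw
  linarith

lemma abs_one_sub_conj {σ w : ℂ} (hσ : ‖σ‖ = 1) :
    ‖1 - (starRingEnd ℂ) σ * w‖ = ‖σ - w‖ := by
  have h1 : (starRingEnd ℂ) σ * σ = 1 := by
    rw [mul_comm, Complex.mul_conj]
    norm_cast
    rw [← Complex.sq_norm, hσ]; norm_num
  have : 1 - (starRingEnd ℂ) σ * w = (starRingEnd ℂ) σ * (σ - w) := by
    rw [mul_sub, h1]
  rw [this, norm_mul, Complex.norm_conj, hσ, one_mul]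

lemma re_cayley {σ w : ℂ} (hσ : ‖σ‖ = 1) (hw : ‖w‖ < 1) :
    ((σ + w) / (σ - w)).re = (1 - ‖w‖ ^ 2) / ‖σ - w‖ ^ 2 := by
  have hne := sigma_ne hσ hw
  have hσ2 : σ.re ^ 2 + σ.im ^ 2 = 1 := by
    have : Complex.normSq σ = 1 := by rw [← Complex.sq_norm] at *; rw [hσ]; norm_num
    simpa [Complex.normSq_apply, sq] using this
  rw [Complex.div_re, Complex.sq_norm, ← Complex.normSq_eq_norm_sq, ← add_div]
  congr 1
  simp only [Complex.add_re, Complex.add_im, Complex.sub_re, Complex.sub_im,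
    Complex.normSq_apply]
  nlinarith [hσ2]

lemma julia {f : ℂ → ℂ} {σ : ℂ} {β : ℝ} (hf : HolSelfDisk f)
    (hσ : ‖σ‖ = 1) (hβ : betaE f σ = (β : EReal)) (hlim : NTLim f σ σ) :
    ∀ z ∈ Metric.ball (0:ℂ) 1,
      (1 - ‖z‖ ^ 2) * ‖1 - (starRingEnd ℂ) σ * f z‖ ^ 2 ≤
      β * ((1 - ‖f z‖ ^ 2) * ‖1 - (starRingEnd ℂ) σ * z‖ ^ 2) := by
  classical
  set l := nhdsWithin σ (Metric.ball (0:ℂ) 1) with hl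
  -- the filter is nontrivial
  have hσcl : σ ∈ closure (Metric.ball (0:ℂ) 1) := by
    rw [closure_ball (0:ℂ) one_ne_zero, mem_closedBall_zero_iff, hσ]
  haveI hne : l.NeBot := mem_closure_iff_nhdsWithin_neBot.mp hσcl
  set ratio : ℂ → ℝ := fun z => (1 - ‖f z‖) / (1 - ‖z‖) with hratio
  -- extract a sequence realizing the liminf
  have hβ' : Filter.liminf (fun z => (((1 - ‖f z‖) / (1 - ‖z‖) : ℝ) : EReal)) l
      = (β : EReal) := hβ
  have H : ∀ n : ℕ, ∃ z : ℂ, z ∈ Metric.ball (0:ℂ) 1 ∧ dist z σ < 1/((n:ℝ)+1) ∧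
      β - 1/((n:ℝ)+1) < ratio z ∧ ratio z < β + 1/((n:ℝ)+1) := by
    intro n
    have hpos : (0:ℝ) < 1/((n:ℝ)+1) := by positivity
    have h1 : ∃ᶠ z in l, ratio z < β + 1/((n:ℝ)+1) := by
      have hlt : Filter.liminf (fun z => (((1 - ‖f z‖) / (1 - ‖z‖) : ℝ) : EReal)) l
          < ((β + 1/((n:ℝ)+1) : ℝ) : EReal) := by
        rw [hβ']
        exact EReal.coe_lt_coe_iff.mpr (by linarith)
      have := Filter.frequently_lt_of_liminf_lt (by isBoundedDefault) hlt
      exact this.mono (fun z hz => by exact_mod_cast hz)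
    have h2 : ∀ᶠ z in l, β - 1/((n:ℝ)+1) < ratio z := by
      have hlt : ((β - 1/((n:ℝ)+1) : ℝ) : EReal)
          < Filter.liminf (fun z => (((1 - ‖f z‖) / (1 - ‖z‖) : ℝ) : EReal)) l := by
        rw [hβ']
        exact EReal.coe_lt_coe_iff.mpr (by linarith)
      have := Filter.eventually_lt_of_lt_liminf hlt
      exact this.mono (fun z hz => by exact_mod_cast hz)
    have h3 : ∀ᶠ z in l, z ∈ Metric.ball (0:ℂ) 1 := eventually_mem_nhdsWithin
    have h4 : ∀ᶠ z in l, dist z σ < 1/((n:ℝ)+1) := by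
      have : Metric.ball σ (1/((n:ℝ)+1)) ∈ l := nhdsWithin_le_nhds (Metric.ball_mem_nhds σ hpos)
      exact Filter.eventually_iff.mpr this
    obtain ⟨z, hz1, hz2, hz3, hz4⟩ := (h1.and_eventually (h2.and (h3.and h4))).exists
    exact ⟨z, hz3, hz4, hz2, hz1⟩
  choose u hu1 hu2 hu3 hu4 using H
  have hinv : Filter.Tendsto (fun n : ℕ => 1/((n:ℝ)+1)) atTop (nhds 0) :=
    tendsto_one_div_add_atTop_nhds_zero_nat
  have huσ : Filter.Tendsto u atTop (nhds σ) := by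
    rw [tendsto_iff_dist_tendsto_zero]
    exact squeeze_zero (fun n => dist_nonneg) (fun n => (hu2 n).le) hinv
  have hρ : Filter.Tendsto (fun n => ratio (u n)) atTop (nhds β) := by
    apply tendsto_of_tendsto_of_tendsto_of_le_of_le
      (g := fun n : ℕ => β - 1/((n:ℝ)+1)) (h := fun n : ℕ => β + 1/((n:ℝ)+1))
    · simpa using (tendsto_const_nhds (x := β)).sub hinv
    · simpa using (tendsto_const_nhds (x := β)).add hinv
    · exact fun n => (hu3 n).le
    · exact fun n => (hu4 n).le
  have habs : Filter.Tendsto (fun n => ‖u n‖) atTop (nhds 1) := by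
    have := (continuous_norm.tendsto σ).comp huσ
    rwa [hσ] at this
  have huball : ∀ n, ‖u n‖ < 1 := fun n => by
    simpa [mem_ball_zero_iff] using hu1 n
  have hfball : ∀ n, ‖f (u n)‖ < 1 := fun n => by
    simpa [mem_ball_zero_iff] using hf.2 (hu1 n)
  have hfabs : Filter.Tendsto (fun n => ‖f (u n)‖) atTop (nhds 1) := by
    have heq : ∀ n, ‖f (u n)‖ = 1 - ratio (u n) * (1 - ‖u n‖) := by
      intro n
      have h : (1 : ℝ) - ‖u n‖ ≠ 0 := by linarith [huball n]
      show ‖f (u n)‖ = 1 - (1 - ‖f (u n)‖) / (1 - ‖u n‖) * (1 - ‖u n‖)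
      rw [div_mul_cancel₀ _ h]; ring
    simp only [heq]
    have : Filter.Tendsto (fun n => 1 - ratio (u n) * (1 - ‖u n‖)) atTop
        (nhds (1 - β * (1 - 1))) :=
      (tendsto_const_nhds).sub (hρ.mul ((tendsto_const_nhds).sub habs))
    simpa using this
  -- extract a subsequence along which f ∘ u converges
  obtain ⟨τ, hτmem, φ, hφmono, hφtend⟩ :=
    (isCompact_closedBall (0:ℂ) 1).tendsto_subseq
      (fun n => Metric.ball_subset_closedBall (hf.2 (hu1 n)))
  have hτ1 : ‖τ‖ = 1 := by
    have h1 : Filter.Tendsto (fun n => ‖f (u (φ n))‖) atTop (nhds (‖τ‖)) :=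
      (continuous_norm.tendsto τ).comp hφtend
    have h2 : Filter.Tendsto (fun n => ‖f (u (φ n))‖) atTop (nhds 1) :=
      hfabs.comp hφmono.tendsto_atTop
    exact tendsto_nhds_unique h1 h2
  set v : ℕ → ℂ := fun n => u (φ n) with hv
  have hvσ : Filter.Tendsto v atTop (nhds σ) := huσ.comp hφmono.tendsto_atTop
  have hρv : Filter.Tendsto (fun n => ratio (v n)) atTop (nhds β) := hρ.comp hφmono.tendsto_atTop
  have hvball : ∀ n, ‖v n‖ < 1 := fun n => huball (φ n)
  have hfvball : ∀ n, ‖f (v n)‖ < 1 := fun n => hfball (φ n)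
  have hvabs : Filter.Tendsto (fun n => ‖v n‖) atTop (nhds 1) :=
    habs.comp hφmono.tendsto_atTop
  have hfvabs : Filter.Tendsto (fun n => ‖f (v n)‖) atTop (nhds 1) :=
    hfabs.comp hφmono.tendsto_atTop
  set r : ℕ → ℝ := fun n => (1 - ‖f (v n)‖ ^ 2) / (1 - ‖v n‖ ^ 2) with hr
  have hrlim : Filter.Tendsto r atTop (nhds β) := by
    have heq : ∀ n, r n = ratio (v n) * ((1 + ‖f (v n)‖) / (1 + ‖v n‖)) := by
      intro n
      have h1 : (1:ℝ) - ‖v n‖ ≠ 0 := by linarith [hvball n]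
      have h2 : (1:ℝ) + ‖v n‖ ≠ 0 := by positivity
      have h3 : (1:ℝ) - ‖v n‖ ^ 2 ≠ 0 := by
        intro h
        apply h1
        nlinarith [norm_nonneg (v n)]
      show (1 - ‖f (v n)‖ ^ 2) / (1 - ‖v n‖ ^ 2) =
        (1 - ‖f (v n)‖) / (1 - ‖v n‖) * ((1 + ‖f (v n)‖) / (1 + ‖v n‖))
      rw [div_mul_div_comm]; congr 1 <;> ring
    rw [funext heq]
    have h2 : Filter.Tendsto (fun n => (1 + ‖f (v n)‖) / (1 + ‖v n‖))
        atTop (nhds ((1+1)/(1+1))) :=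
      ((tendsto_const_nhds).add hfvabs).div ((tendsto_const_nhds).add hvabs) (by norm_num)
    have := hρv.mul h2
    norm_num at this
    simpa using this
  -- Julia's lemma with τ in place of σ
  have juliaτ : ∀ z ∈ Metric.ball (0:ℂ) 1,
      (1 - ‖z‖ ^ 2) * ‖1 - (starRingEnd ℂ) τ * f z‖ ^ 2 ≤
      β * ((1 - ‖f z‖ ^ 2) * ‖1 - (starRingEnd ℂ) σ * z‖ ^ 2) := by
    intro z hzb
    have hz : ‖z‖ < 1 := by simpa [mem_ball_zero_iff] using hzb
    have hfz : ‖f z‖ < 1 := by simpa [mem_ball_zero_iff] using hf.2 hzb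
    have ineq : ∀ n, (1 - ‖z‖ ^ 2) *
        ‖1 - (starRingEnd ℂ) (f (v n)) * f z‖ ^ 2 ≤
        (1 - ‖f z‖ ^ 2) * r n * ‖1 - (starRingEnd ℂ) (v n) * z‖ ^ 2 := by
      intro n
      have hpos : (0:ℝ) < 1 - ‖v n‖ ^ 2 := by nlinarith [hvball n, norm_nonneg (v n)]
      have A := sp2 hf hz (hvball n)
      have hfe : 1 - ‖f (v n)‖ ^ 2 = r n * (1 - ‖v n‖ ^ 2) :=
        (div_mul_cancel₀ _ hpos.ne').symm
      rw [hfe] at A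
      have A' : ((1 - ‖z‖ ^ 2) * ‖1 - (starRingEnd ℂ) (f (v n)) * f z‖ ^ 2)
            * (1 - ‖v n‖ ^ 2) ≤
          ((1 - ‖f z‖ ^ 2) * r n * ‖1 - (starRingEnd ℂ) (v n) * z‖ ^ 2)
            * (1 - ‖v n‖ ^ 2) := by
        calc _ = (1 - ‖z‖ ^ 2) * (1 - ‖v n‖ ^ 2) *
            ‖1 - (starRingEnd ℂ) (f (v n)) * f z‖ ^ 2 := by ring
          _ ≤ _ := A.trans_eq (by ring)
      exact le_of_mul_le_mul_right A' hpos
    have hL : Filter.Tendsto (fun n => (1 - ‖z‖ ^ 2) *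
        ‖1 - (starRingEnd ℂ) (f (v n)) * f z‖ ^ 2) atTop
        (nhds ((1 - ‖z‖ ^ 2) * ‖1 - (starRingEnd ℂ) τ * f z‖ ^ 2)) := by
      have hc : Continuous fun u : ℂ => (1 - ‖z‖ ^ 2) *
          ‖1 - (starRingEnd ℂ) u * f z‖ ^ 2 := by
        apply continuous_const.mul
        apply (continuous_norm.comp _).pow
        exact continuous_const.sub (Complex.continuous_conj.mul continuous_const)
      exact (hc.tendsto τ).comp hφtend
    have hR : Filter.Tendsto (fun n => (1 - ‖f z‖ ^ 2) * r n *
        ‖1 - (starRingEnd ℂ) (v n) * z‖ ^ 2) atTop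
        (nhds ((1 - ‖f z‖ ^ 2) * β *
          ‖1 - (starRingEnd ℂ) σ * z‖ ^ 2)) := by
      have hc : Continuous fun u : ℂ => ‖1 - (starRingEnd ℂ) u * z‖ ^ 2 := by
        apply (continuous_norm.comp _).pow
        exact continuous_const.sub (Complex.continuous_conj.mul continuous_const)
      exact ((tendsto_const_nhds.mul hrlim)).mul ((hc.tendsto σ).comp hvσ)
    have := le_of_tendsto_of_tendsto' hL hR ineq
    linarith [this]
  -- now show τ = σ using the radial sequence
  have hτσ : τ = σ := by
    set w : ℕ → ℂ := fun k => ((1 - 1/((k:ℝ)+1) : ℝ) : ℂ) * σ with hw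
    have hwabs : ∀ k, ‖w k‖ = 1 - 1/((k:ℝ)+1) := by
      intro k
      have h1 : (0:ℝ) ≤ 1 - 1/((k:ℝ)+1) := by
        have : 1/((k:ℝ)+1) ≤ 1 := by
          rw [div_le_one (by positivity)]; linarith [Nat.cast_nonneg (α := ℝ) k]
        linarith
      rw [hw, norm_mul, Complex.norm_real, Real.norm_eq_abs, hσ, mul_one, _root_.abs_of_nonneg h1]
    have hwball : ∀ k, ‖w k‖ < 1 := by
      intro k
      rw [hwabs k]
      have : (0:ℝ) < 1/((k:ℝ)+1) := by positivity
      linarith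
    have hwstolz : ∀ k, w k ∈ Stolz σ 2 := by
      intro k
      constructor
      · exact hwball k
      · have h1 : σ - w k = ((1/((k:ℝ)+1) : ℝ) : ℂ) * σ := by
          rw [hw]; push_cast; ring
        rw [h1, norm_mul, Complex.norm_real, Real.norm_eq_abs, hσ, mul_one, hwabs k,
          abs_of_pos (by positivity : (0:ℝ) < 1/((k:ℝ)+1))]
        rw [show (1:ℝ) - (1 - 1/((k:ℝ)+1)) = 1/((k:ℝ)+1) by ring]
        rw [div_self (by positivity : (1:ℝ)/((k:ℝ)+1) ≠ 0)]
        norm_num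
    have hwσ : Filter.Tendsto w atTop (nhds σ) := by
      rw [tendsto_iff_dist_tendsto_zero]
      have hdist : ∀ k : ℕ, dist (w k) σ = 1/((k:ℝ)+1) := by
        intro k
        have h2 : σ - w k = ((1/((k:ℝ)+1) : ℝ) : ℂ) * σ := by
          rw [hw]; push_cast; ring
        rw [dist_comm, Complex.dist_eq, h2, norm_mul, Complex.norm_real, Real.norm_eq_abs, hσ, mul_one,
          _root_.abs_of_pos (by positivity : (0:ℝ) < 1/((k:ℝ)+1))]
      simp only [hdist]
      exact hinv
    have hwt : Filter.Tendsto w atTop (nhdsWithin σ (Stolz σ 2)) :=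
      tendsto_nhdsWithin_of_tendsto_nhds_of_eventually_within w hwσ
        (Filter.Eventually.of_forall hwstolz)
    have hfw : Filter.Tendsto (fun k => f (w k)) atTop (nhds σ) := (hlim 2 one_lt_two).comp hwt
    have hβ0 : 0 ≤ β := by
      refine ge_of_tendsto' hρ (fun n => ?_)
      have h1 : (0:ℝ) < 1 - ‖u n‖ := by linarith [huball n]
      have h2 : (0:ℝ) ≤ 1 - ‖f (u n)‖ := by linarith [hfball n]
      exact div_nonneg h2 h1.le
    -- key bound : |1 - conj τ * f (w k)|^2 ≤ β * (1/(k+1))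
    have key : ∀ k : ℕ, ‖1 - (starRingEnd ℂ) τ * f (w k)‖ ^ 2 ≤ β * (1/((k:ℝ)+1)) := by
      intro k
      have hwb : w k ∈ Metric.ball (0:ℂ) 1 := mem_ball_zero_iff.2 (by
        exact hwball k)
      have hJ := juliaτ (w k) hwb
      have hfwb : ‖f (w k)‖ < 1 := by simpa [mem_ball_zero_iff] using hf.2 hwb
      have e1 : ‖1 - (starRingEnd ℂ) σ * w k‖ = 1/((k:ℝ)+1) := by
        have h1 : (starRingEnd ℂ) σ * σ = 1 := by
          rw [mul_comm, Complex.mul_conj]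
          norm_cast
          rw [← Complex.sq_norm, hσ]; norm_num
        have h2 : 1 - (starRingEnd ℂ) σ * w k = ((1/((k:ℝ)+1):ℝ):ℂ) * ((starRingEnd ℂ) σ * σ) := by
          rw [hw]; push_cast; linear_combination -h1
        rw [h2, h1, mul_one, Complex.norm_real, Real.norm_eq_abs, abs_of_pos (by positivity)]
      have e2 : 1 - ‖w k‖ ^ 2 ≥ 1/((k:ℝ)+1) := by
        rw [hwabs k]
        have h1 : (0:ℝ) < 1/((k:ℝ)+1) := by positivity
        have h2 : 1/((k:ℝ)+1) ≤ 1 := by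
          rw [div_le_one (by positivity)]; linarith [Nat.cast_nonneg (α := ℝ) k]
        nlinarith
      have e3 : 1 - ‖f (w k)‖ ^ 2 ≤ 1 := by
        nlinarith [sq_nonneg (‖f (w k)‖)]
      rw [e1] at hJ
      have h1 : (0:ℝ) < 1/((k:ℝ)+1) := by positivity
      have hXnn : (0:ℝ) ≤ ‖1 - (starRingEnd ℂ) τ * f (w k)‖ ^ 2 := by positivity
      -- hJ : (1 - |w k|²) * X ≤ β * ((1 - |f w k|²) * (1/(k+1))²)
      have step1 : (1/((k:ℝ)+1)) * ‖1 - (starRingEnd ℂ) τ * f (w k)‖ ^ 2 ≤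
          β * (1/((k:ℝ)+1))^2 := by
        calc (1/((k:ℝ)+1)) * ‖1 - (starRingEnd ℂ) τ * f (w k)‖ ^ 2
            ≤ (1 - ‖w k‖ ^ 2) * ‖1 - (starRingEnd ℂ) τ * f (w k)‖ ^ 2 :=
              mul_le_mul_of_nonneg_right e2 hXnn
          _ ≤ β * ((1 - ‖f (w k)‖ ^ 2) * (1/((k:ℝ)+1))^2) := hJ
          _ ≤ β * (1/((k:ℝ)+1))^2 := by
              apply mul_le_mul_of_nonneg_left _ hβ0
              nlinarith [norm_nonneg (f (w k)), sq_nonneg (1/((k:ℝ)+1))]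
      exact le_of_mul_le_mul_left (step1.trans_eq (by ring :
        β * (1/((k:ℝ)+1))^2 = (1/((k:ℝ)+1)) * (β * (1/((k:ℝ)+1))))) h1
    have hXlim : Filter.Tendsto (fun k => ‖1 - (starRingEnd ℂ) τ * f (w k)‖ ^ 2)
        atTop (nhds (‖1 - (starRingEnd ℂ) τ * σ‖ ^ 2)) := by
      have hc : Continuous fun u : ℂ => ‖1 - (starRingEnd ℂ) τ * u‖ ^ 2 := by
        apply (continuous_norm.comp _).pow
        exact continuous_const.sub (continuous_const.mul continuous_id)
      exact (hc.tendsto σ).comp hfw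
    have hRlim : Filter.Tendsto (fun k : ℕ => β * (1/((k:ℝ)+1))) atTop (nhds 0) := by
      have := hinv.const_mul β
      simpa using this
    have hle : ‖1 - (starRingEnd ℂ) τ * σ‖ ^ 2 ≤ 0 :=
      le_of_tendsto_of_tendsto' hXlim hRlim key
    have hzero : ‖1 - (starRingEnd ℂ) τ * σ‖ = 0 := by
      nlinarith [norm_nonneg (1 - (starRingEnd ℂ) τ * σ)]
    have h1 : (starRingEnd ℂ) τ * σ = 1 := by
      have := norm_eq_zero.mp hzero
      linear_combination -this
    -- conclude τ = σ
    have h2 : (starRingEnd ℂ) τ = (starRingEnd ℂ) σ := by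
      have hσ1 : (starRingEnd ℂ) σ * σ = 1 := by
        rw [mul_comm, Complex.mul_conj]
        norm_cast
        rw [← Complex.sq_norm, hσ]; norm_num
      have hσne : σ ≠ 0 := by
        intro h; rw [h] at hσ; simp at hσ
      have h3 : ((starRingEnd ℂ) τ - (starRingEnd ℂ) σ) * σ = 0 := by
        linear_combination h1 - hσ1
      rcases mul_eq_zero.mp h3 with h | h
      · exact sub_eq_zero.mp h
      · exact absurd h hσne
    have := congrArg (starRingEnd ℂ) h2
    simpa using this
  subst hτσ
  exact juliaτ

lemma cp_main (f : ℂ → ℂ) (σ : ℂ) (β : ℝ) (hf : HolSelfDisk f)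
    (hf0 : f 0 = 0) (hσ : ‖σ‖ = 1)
    (julia : ∀ z ∈ Metric.ball (0:ℂ) 1,
      (1 - ‖z‖ ^ 2) * ‖1 - (starRingEnd ℂ) σ * f z‖ ^ 2 ≤
      β * ((1 - ‖f z‖ ^ 2) * ‖1 - (starRingEnd ℂ) σ * z‖ ^ 2)) :
    β ≥ 1 + ‖1 - deriv f 0‖ ^ 2 / (1 - ‖deriv f 0‖ ^ 2) := by
  have h0mem : (0:ℂ) ∈ Metric.ball (0:ℂ) 1 := Metric.mem_ball_self one_pos
  have hσ0 : σ ≠ 0 := by intro h; rw [h] at hσ; simp at hσ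
  set c := deriv f 0 with hc
  -- β ≥ 1
  have hβ1 : (1:ℝ) ≤ β := by
    have := julia 0 h0mem
    rw [hf0] at this
    simpa using this
  have hβpos : (0:ℝ) < β := lt_of_lt_of_le one_pos hβ1
  by_cases hd : 1 - ‖c‖ ^ 2 ≤ 0
  · have : ‖1 - c‖ ^ 2 / (1 - ‖c‖ ^ 2) ≤ 0 :=
      div_nonpos_iff.mpr (Or.inl ⟨by positivity, hd⟩)
    linarith
  push_neg at hd
  -- the auxiliary function G
  set G : ℂ → ℂ := fun z => (σ + f z) / (σ - f z) - ((β⁻¹ : ℝ) : ℂ) * ((σ + z) / (σ - z)) with hG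
  have habsz : ∀ z ∈ Metric.ball (0:ℂ) 1, ‖z‖ < 1 := fun z hz => by
    simpa [mem_ball_zero_iff] using hz
  have habsf : ∀ z ∈ Metric.ball (0:ℂ) 1, ‖f z‖ < 1 := fun z hz => by
    simpa [mem_ball_zero_iff] using hf.2 hz
  have hGd : DifferentiableOn ℂ G (Metric.ball (0:ℂ) 1) := by
    apply DifferentiableOn.sub
    · exact ((differentiableOn_const _).add hf.1).div ((differentiableOn_const _).sub hf.1)
        (fun z hz => sigma_ne hσ (habsf z hz))
    · exact DifferentiableOn.const_mul (((differentiableOn_const _).add differentiableOn_id).div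
        ((differentiableOn_const _).sub differentiableOn_id)
        (fun z hz => sigma_ne hσ (habsz z hz))) _
  have hGre : ∀ z ∈ Metric.ball (0:ℂ) 1, 0 ≤ (G z).re := by
    intro z hz
    have hz1 := habsz z hz
    have hfz1 := habsf z hz
    have hA : (0:ℝ) < ‖σ - f z‖ := norm_pos_iff.mpr (sigma_ne hσ hfz1)
    have hB : (0:ℝ) < ‖σ - z‖ := norm_pos_iff.mpr (sigma_ne hσ hz1)
    have hJ := julia z hz
    rw [abs_one_sub_conj hσ, abs_one_sub_conj hσ] at hJ
    have hGz : (G z).re = (1 - ‖f z‖ ^ 2) / ‖σ - f z‖ ^ 2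
        - β⁻¹ * ((1 - ‖z‖ ^ 2) / ‖σ - z‖ ^ 2) := by
      rw [hG]
      simp only [Complex.sub_re, Complex.re_ofReal_mul]
      rw [re_cayley hσ hfz1, re_cayley hσ hz1]
    rw [hGz, sub_nonneg]
    rw [mul_div_assoc', div_le_div_iff₀ (by positivity) (by positivity)]
    have hstep : β⁻¹ * ((1 - ‖z‖ ^ 2) * ‖σ - f z‖ ^ 2) ≤
        β⁻¹ * (β * ((1 - ‖f z‖ ^ 2) * ‖σ - z‖ ^ 2)) :=
      mul_le_mul_of_nonneg_left hJ (by positivity)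
    have heq : β⁻¹ * (β * ((1 - ‖f z‖ ^ 2) * ‖σ - z‖ ^ 2)) =
        (1 - ‖f z‖ ^ 2) * ‖σ - z‖ ^ 2 := by
      field_simp
    rw [heq] at hstep
    calc β⁻¹ * (1 - ‖z‖ ^ 2) * ‖σ - f z‖ ^ 2
        = β⁻¹ * ((1 - ‖z‖ ^ 2) * ‖σ - f z‖ ^ 2) := by ring
      _ ≤ _ := hstep
  have hG0 : G 0 = 1 - ((β⁻¹ : ℝ) : ℂ) := by
    rw [hG]
    simp only [hf0]
    rw [sub_zero, add_zero, div_self hσ0, mul_one]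
  -- derivative of G at 0
  have hfd : HasDerivAt f c 0 := by
    have : DifferentiableAt ℂ f 0 := hf.1.differentiableAt (isOpen_ball.mem_nhds h0mem)
    exact this.hasDerivAt
  have h1 : HasDerivAt (fun z => (σ + f z) / (σ - f z))
      (((0 + c) * (σ - f 0) - (σ + f 0) * (0 - c)) / (σ - f 0) ^ 2) 0 :=
    (((hasDerivAt_const 0 σ).add hfd)).div ((hasDerivAt_const 0 σ).sub hfd)
      (by rw [hf0, sub_zero]; exact hσ0)
  have h2 : HasDerivAt (fun z : ℂ => (σ + z) / (σ - z))
      (((0 + 1) * (σ - 0) - (σ + 0) * (0 - 1)) / (σ - 0) ^ 2) 0 :=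
    (((hasDerivAt_const 0 σ).add (hasDerivAt_id 0))).div
      ((hasDerivAt_const 0 σ).sub (hasDerivAt_id 0)) (by rw [sub_zero]; exact hσ0)
  have hGder : HasDerivAt G
      ((((0 + c) * (σ - f 0) - (σ + f 0) * (0 - c)) / (σ - f 0) ^ 2) -
        ((β⁻¹ : ℝ) : ℂ) * (((0 + 1) * (σ - 0) - (σ + 0) * (0 - 1)) / (σ - 0) ^ 2)) 0 :=
    h1.sub (h2.const_mul _)
  have hval : (((0 + c) * (σ - f 0) - (σ + f 0) * (0 - c)) / (σ - f 0) ^ 2) -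
      ((β⁻¹ : ℝ) : ℂ) * (((0 + 1) * (σ - 0) - (σ + 0) * (0 - 1)) / (σ - 0) ^ 2)
      = (2 / σ) * (c - ((β⁻¹ : ℝ) : ℂ)) := by
    rw [hf0]
    have h4 : σ ^ 4 * σ⁻¹ ^ 2 = σ ^ 2 := by
      rw [show (4:ℕ) = 2 + 2 by norm_num, pow_add, mul_assoc, ← mul_pow,
        mul_inv_cancel₀ hσ0]
      norm_num
    field_simp
    ring_nf
  rw [hval] at hGder
  have hderG : deriv G 0 = (2 / σ) * (c - ((β⁻¹ : ℝ) : ℂ)) := hGder.deriv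
  have hH := harnack hGd hGre
  rw [hderG, hG0, norm_mul, norm_div, hσ] at hH
  have habs2 : ‖(2:ℂ)‖ = 2 := by
    rw [show ((2:ℂ)) = ((2:ℝ):ℂ) by norm_num, Complex.norm_real, Real.norm_eq_abs]; norm_num
  rw [habs2] at hH
  have hre10 : ((1:ℂ) - ((β⁻¹ : ℝ) : ℂ)).re = 1 - β⁻¹ := by
    simp [Complex.sub_re]
  rw [hre10] at hH
  have hkey : ‖(c - ((β⁻¹ : ℝ) : ℂ))‖ ≤ 1 - β⁻¹ := by
    have : 2 / 1 * ‖(c - ((β⁻¹ : ℝ) : ℂ))‖ = 2 * ‖(c - ((β⁻¹ : ℝ) : ℂ))‖ := by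
      norm_num
    rw [this] at hH
    linarith
  -- final algebra
  have hsq : (c.re - β⁻¹) ^ 2 + c.im ^ 2 ≤ (1 - β⁻¹) ^ 2 := by
    have h1 : ‖(c - ((β⁻¹ : ℝ) : ℂ))‖ ^ 2 ≤ (1 - β⁻¹) ^ 2 :=
      pow_le_pow_left₀ (norm_nonneg _) hkey 2
    rw [Complex.sq_norm, Complex.normSq_apply] at h1
    simp only [Complex.sub_re, Complex.sub_im, Complex.ofReal_re, Complex.ofReal_im, sub_zero] at h1
    nlinarith [h1]
  have he1 : ‖1 - c‖ ^ 2 = (1 - c.re) ^ 2 + c.im ^ 2 := by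
    rw [Complex.sq_norm, Complex.normSq_apply]
    simp only [Complex.sub_re, Complex.sub_im, Complex.one_re, Complex.one_im, zero_sub]
    ring
  have he2 : ‖c‖ ^ 2 = c.re ^ 2 + c.im ^ 2 := by
    rw [Complex.sq_norm, Complex.normSq_apply]; ring
  rw [he2] at hd
  have hinvβ : β⁻¹ * β = 1 := inv_mul_cancel₀ hβpos.ne'
  have key2 : 2 * (1 - c.re) ≤ β * (1 - c.re ^ 2 - c.im ^ 2) := by
    have h3 : 2 * β⁻¹ * (1 - c.re) ≤ 1 - c.re ^ 2 - c.im ^ 2 := by nlinarith [hsq]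
    have h4 := mul_le_mul_of_nonneg_left h3 hβpos.le
    calc 2 * (1 - c.re) = β * (2 * β⁻¹ * (1 - c.re)) := by
          field_simp
        _ ≤ β * (1 - c.re ^ 2 - c.im ^ 2) := h4
  have hq : ‖1 - c‖ ^ 2 / (1 - ‖c‖ ^ 2) ≤ β - 1 := by
    rw [he1, he2, div_le_iff₀ (by nlinarith [hd])]
    nlinarith [key2, hd]
  linarith

end CPAux

/-- Cowen–Pommerenke estimate for a single boundary fixed point. -/
theorem stmt10 (f : ℂ → ℂ) (σ : ℂ) (β : ℝ) (hf : HolSelfDisk f)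
    (hnot : ¬ IsBlaschke 1 f) (hf0 : f 0 = 0)
    (hσ : ‖σ‖ = 1) (hβ : betaE f σ = (β : EReal))
    (hlim : NTLim f σ σ) :
    β ≥ 1 + ‖1 - deriv f 0‖ ^ 2 / (1 - ‖deriv f 0‖ ^ 2) := by
  have hJ := julia hf hσ hβ hlim
  exact cp_main f σ β hf hf0 hσ hJ
end
end
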